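/- arXiv:1011.6076 — 2 statements merged into one kernel-verified Lean document; each statement's English description precedes it below -/
import Mathlib

section
/- Let F be the Minkowski gauge of a compact convex body K ⊂ ℝⁿ with 0 in its interior, with F of class C¹ on ℝⁿ∖{0}, C ≥ 1 a constant with F(−v) ≤ C·F(v) for all v, and assume the Legendre map ℓ is a homeomorphism of ℝⁿ onto (ℝⁿ)*. Let μ be a Borel probability measure supported in B̄(x₀,R) whose support is not contained in a single affine line, and assume that for every z ∈ B̄(x₀,R) the function x ↦ F(z−x) is strictly convex along every nonconstant segment in B̄(x₀, C(1+C)R) whose affine line does not pass through z (so μ has a unique median m in B̄(x₀, C(1+C)R)). Let a ↦ x(a) be a continuous path with x(0) = x₀ satisfying: x′(a) = −ℓ⁻¹(D F_{μ_{x(a)}}(x(a))) as long as μ({x(a′)}) < F*(D F_{μ_{x(a′)}}(x(a′))) for all a′ ≤ a, and x′(a) = 0 once μ({x(a′)}) ≥ F*(D F_{μ_{x(a′)}}(x(a′))) for some a′ ≤ a. Then x(a) converges as a → ∞ to the median m. -/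
open MeasureTheory Metric Set Filter


/-- Bundled facts about a Minkowski gauge on a normed space. -/
structure GaugeFacts {E : Type*} [NormedAddCommGroup E] [NormedSpace ℝ E]
    (F : E → ℝ) : Prop where
  zero : F 0 = 0
  nonneg : ∀ v, 0 ≤ F v
  add_le : ∀ u v, F (u + v) ≤ F u + F v
  smul : ∀ (t : ℝ), 0 ≤ t → ∀ v, F (t • v) = t * F v
  upper : ∃ β : ℝ, 0 < β ∧ ∀ v, F v ≤ β * ‖v‖
  lower : ∃ α : ℝ, 0 < α ∧ ∀ v : E, α * ‖v‖ ≤ F v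

namespace GaugeFacts

variable {E : Type*} [NormedAddCommGroup E] [NormedSpace ℝ E] {F : E → ℝ}

theorem eq_zero_iff (h : GaugeFacts F) {v : E} : F v = 0 ↔ v = 0 := by
  obtain ⟨α, hα, hl⟩ := h.lower
  constructor
  · intro hv
    have := hl v
    rw [hv] at this
    have : ‖v‖ ≤ 0 := by nlinarith
    simpa using le_antisymm this (norm_nonneg v)
  · rintro rfl; exact h.zero

theorem pos (h : GaugeFacts F) {v : E} (hv : v ≠ 0) : 0 < F v :=
  lt_of_le_of_ne (h.nonneg v) (fun hc => hv ((h.eq_zero_iff).mp hc.symm))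

theorem sub_le (h : GaugeFacts F) (u w : E) : F u - F w ≤ F (u - w) := by
  have := h.add_le (u - w) w
  simp only [sub_add_cancel] at this
  linarith

theorem abs_sub_le (h : GaugeFacts F) : ∃ β : ℝ, 0 < β ∧
    ∀ u w : E, |F u - F w| ≤ β * ‖u - w‖ := by
  obtain ⟨β, hβ, hu⟩ := h.upper
  refine ⟨β, hβ, fun u w => ?_⟩
  rcases abs_cases (F u - F w) with ⟨he, _⟩ | ⟨he, _⟩ <;> rw [he]
  · exact (h.sub_le u w).trans (hu _)
  · have := (h.sub_le w u).trans (hu (w - u))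
    rw [← neg_sub u w, norm_neg] at this
    linarith

theorem lipschitzWith (h : GaugeFacts F) : ∃ β : ℝ, 0 < β ∧
    LipschitzWith (Real.toNNReal β) F := by
  obtain ⟨β, hβ, hu⟩ := h.abs_sub_le
  refine ⟨β, hβ, LipschitzWith.of_dist_le_mul fun u w => ?_⟩
  rw [Real.dist_eq, dist_eq_norm, Real.coe_toNNReal β hβ.le]
  exact hu u w

theorem continuous (h : GaugeFacts F) : Continuous F := by
  obtain ⟨β, _, hβ⟩ := h.lipschitzWith
  exact hβ.continuous

theorem convexOn (h : GaugeFacts F) : ConvexOn ℝ Set.univ F := by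
  refine ⟨convex_univ, fun u _ w _ a b ha hb _ => ?_⟩
  calc F (a • u + b • w) ≤ F (a • u) + F (b • w) := h.add_le _ _
    _ = a * F u + b * F w := by rw [h.smul a ha, h.smul b hb]
    _ = a • F u + b • F w := rfl

/-- The gauge of a compact convex body with `0` in its interior satisfies `GaugeFacts`. -/
theorem of_gauge {K : Set E} (hK_cpt : Bornology.IsBounded K) (hK_conv : Convex ℝ K)
    (hK_int : (0 : E) ∈ interior K) : GaugeFacts (gauge K) := by
  have hnhds : K ∈ nhds (0 : E) := mem_interior_iff_mem_nhds.mp hK_int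
  have habs : Absorbent ℝ K := absorbent_nhds_zero hnhds
  obtain ⟨r, hr, hball⟩ := Metric.mem_nhds_iff.mp hnhds
  obtain ⟨M, hM⟩ := hK_cpt.subset_closedBall 0
  have hM' : 0 < max M 1 := lt_of_lt_of_le one_pos (le_max_right _ _)
  have hKM : K ⊆ Metric.closedBall 0 (max M 1) :=
    hM.trans (Metric.closedBall_subset_closedBall (le_max_left _ _))
  refine ⟨gauge_zero, gauge_nonneg, gauge_add_le hK_conv habs, ?_, ?_, ?_⟩
  · intro t ht v
    rw [gauge_smul_of_nonneg ht]
    rfl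
  · refine ⟨2 / r, by positivity, fun v => ?_⟩
    have : Metric.ball (0 : E) r ⊆ K := hball
    have h1 : gauge K v ≤ gauge (Metric.ball (0 : E) r) v :=
      gauge_mono (absorbent_nhds_zero (Metric.ball_mem_nhds 0 hr)) this v
    rw [gauge_ball hr.le] at h1
    have : ‖v‖ / r ≤ 2 / r * ‖v‖ := by
      rw [div_eq_mul_inv, div_eq_mul_inv]
      have h2 : (0:ℝ) ≤ ‖v‖ * r⁻¹ := by positivity
      nlinarith [norm_nonneg v]
    linarith
  · refine ⟨1 / max M 1, by positivity, fun v => ?_⟩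
    have h1 : gauge (Metric.closedBall (0 : E) (max M 1)) v ≤ gauge K v :=
      gauge_mono habs hKM v
    rw [gauge_closedBall hM'.le] at h1
    rw [div_eq_mul_inv] at h1
    rw [one_div]
    linarith [h1]

end GaugeFacts


section L2
variable {E : Type*} [NormedAddCommGroup E] [NormedSpace ℝ E]

/-- Gradient inequality for a convex function differentiable at a point. -/
theorem convexOn_fderiv_le {f : E → ℝ} (hf : ConvexOn ℝ Set.univ f) {x : E}
    {ξ : E →L[ℝ] ℝ} (hd : HasFDerivAt f ξ x) (y : E) : f x + ξ (y - x) ≤ f y := by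
  set h : ℝ → ℝ := fun t => f (x + t • (y - x)) with hh
  have hpath : ∀ t : ℝ, HasDerivAt (fun s : ℝ => x + s • (y - x)) (y - x) t := by
    intro t
    simpa using ((hasDerivAt_id t).smul_const (y - x)).const_add x
  have hd' : HasFDerivAt f ξ (x + (0:ℝ) • (y - x)) := by simpa using hd
  have hd0 : HasDerivAt h (ξ (y - x)) 0 := hd'.comp_hasDerivAt 0 (hpath 0)
  have key : ∀ t : ℝ, 0 < t → t < 1 → (h t - h 0) / t ≤ f y - f x := by
    intro t ht ht1
    have hconv := hf.2 (mem_univ x) (mem_univ y) (by linarith : (0:ℝ) ≤ 1 - t) ht.le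
      (by ring)
    have hxy : (1 - t) • x + t • y = x + t • (y - x) := by
      rw [smul_sub]; module
    rw [hxy] at hconv
    have : h t ≤ (1 - t) * f x + t * f y := by simpa [hh] using hconv
    have h0 : h 0 = f x := by simp [hh]
    rw [div_le_iff₀ ht, h0]
    nlinarith
  have htend : Tendsto (fun t : ℝ => (h t - h 0) / t) (nhdsWithin 0 (Ioi 0))
      (nhds (ξ (y - x))) := by
    have := (hasDerivAt_iff_tendsto_slope.mp hd0).mono_left
      (nhdsWithin_mono 0 (fun t (ht : t ∈ Ioi (0:ℝ)) => ne_of_gt ht))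
    refine this.congr' ?_
    filter_upwards [self_mem_nhdsWithin] with t (ht : t ∈ Ioi (0:ℝ))
    rw [slope_def_field]
    field_simp
    rw [sub_zero]
  have hle : ξ (y - x) ≤ f y - f x := by
    refine le_of_tendsto htend ?_
    filter_upwards [Ioo_mem_nhdsGT_of_mem (by norm_num : (0:ℝ) ∈ Ico (0:ℝ) 1)]
      with t ht
    exact key t ht.1 ht.2
  linarith

/-- Euler's identity for a positively homogeneous function differentiable at `v`. -/
theorem euler_identity {F : E → ℝ} (hsm : ∀ (t : ℝ), 0 ≤ t → ∀ v : E, F (t • v) = t * F v)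
    {v : E} {ξ : E →L[ℝ] ℝ} (hd : HasFDerivAt F ξ v) : ξ v = F v := by
  have hpath : HasDerivAt (fun s : ℝ => s • v) v 1 := by
    simpa using (hasDerivAt_id (1:ℝ)).smul_const v
  have hd' : HasFDerivAt F ξ ((1:ℝ) • v) := by simpa using hd
  have hd1 : HasDerivAt (fun t : ℝ => F (t • v)) (ξ v) 1 := hd'.comp_hasDerivAt 1 hpath
  have heq : (fun t : ℝ => F (t • v)) =ᶠ[nhds (1:ℝ)] fun t => t * F v := by
    filter_upwards [Ioi_mem_nhds (by norm_num : (0:ℝ) < 1)] with t ht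
    exact hsm t (le_of_lt ht) v
  have hd2 : HasDerivAt (fun t : ℝ => t * F v) (ξ v) 1 :=
    hd1.congr_of_eventuallyEq heq.symm
  have hd3 : HasDerivAt (fun t : ℝ => t * F v) (F v) 1 := by
    simpa using (hasDerivAt_id (1:ℝ)).mul_const (F v)
  exact hd2.unique hd3

end L2


section L3
variable {E : Type*} [NormedAddCommGroup E] [NormedSpace ℝ E] [ProperSpace E]
variable {F : E → ℝ} {Fs : (E →L[ℝ] ℝ) → ℝ}

theorem unitSet_compact (hGF : GaugeFacts F) : IsCompact {y : E | F y ≤ 1} := by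
  obtain ⟨α, hα, hl⟩ := hGF.lower
  have hb : Bornology.IsBounded {y : E | F y ≤ 1} := by
    refine (Metric.isBounded_closedBall (x := (0:E)) (r := 1/α)).subset ?_
    intro y hy
    simp only [mem_setOf_eq] at hy
    simp only [Metric.mem_closedBall, dist_zero_right]
    rw [le_div_iff₀ hα, mul_comm]
    exact (hl y).trans hy
  have hc : IsClosed {y : E | F y ≤ 1} := isClosed_le hGF.continuous continuous_const
  exact Metric.isCompact_of_isClosed_isBounded hc hb

theorem Fs_nonneg (hGF : GaugeFacts F)
    (hFs : Fs = fun ξ : E →L[ℝ] ℝ => sSup (⇑ξ '' {y | F y ≤ 1})) (ξ : E →L[ℝ] ℝ) :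
    0 ≤ Fs ξ := by
  have h0 : (0:E) ∈ {y : E | F y ≤ 1} := by simp [hGF.zero]
  have hbdd : BddAbove (⇑ξ '' {y : E | F y ≤ 1}) :=
    ((unitSet_compact hGF).image ξ.continuous).bddAbove
  have := le_csSup hbdd (mem_image_of_mem _ h0)
  rw [hFs]
  simpa using this

theorem Fs_le (hGF : GaugeFacts F)
    (hFs : Fs = fun ξ : E →L[ℝ] ℝ => sSup (⇑ξ '' {y | F y ≤ 1})) (ξ : E →L[ℝ] ℝ)
    {c : ℝ} (hc : ∀ y, F y ≤ 1 → ξ y ≤ c) : Fs ξ ≤ c := by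
  rw [hFs]
  refine csSup_le ⟨ξ 0, mem_image_of_mem _ (by simp [hGF.zero])⟩ ?_
  rintro r ⟨y, hy, rfl⟩
  exact hc y hy

theorem apply_le_Fs (hGF : GaugeFacts F)
    (hFs : Fs = fun ξ : E →L[ℝ] ℝ => sSup (⇑ξ '' {y | F y ≤ 1})) (ξ : E →L[ℝ] ℝ)
    (w : E) : ξ w ≤ Fs ξ * F w := by
  rcases eq_or_ne w 0 with rfl | hw
  · simp [hGF.zero]
  · have hFw : 0 < F w := hGF.pos hw
    set y := (F w)⁻¹ • w with hy
    have hFy : F y = 1 := by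
      rw [hy, hGF.smul _ (by positivity), inv_mul_cancel₀ hFw.ne']
    have hbdd : BddAbove (⇑ξ '' {y : E | F y ≤ 1}) :=
      ((unitSet_compact hGF).image ξ.continuous).bddAbove
    have h1 : ξ y ≤ Fs ξ := by
      rw [hFs]
      exact le_csSup hbdd (mem_image_of_mem _ (by simp [hFy]))
    have h2 : ξ w = F w * ξ y := by
      have : ξ y = (F w)⁻¹ * ξ w := by rw [hy]; simp
      rw [this]
      field_simp
    rw [h2, mul_comm (Fs ξ) (F w)]
    exact mul_le_mul_of_nonneg_left h1 hFw.le
end L3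

section L3b
variable {E : Type*} [NormedAddCommGroup E] [NormedSpace ℝ E] [ProperSpace E]
variable {F : E → ℝ} {Fs : (E →L[ℝ] ℝ) → ℝ} {ℓ : E → (E →L[ℝ] ℝ)}

theorem F_hasFDerivAt (hFsmooth : ContDiffOn ℝ 1 F {(0 : E)}ᶜ) {v : E} (hv : v ≠ 0) :
    HasFDerivAt F (fderiv ℝ F v) v := by
  have hA : DifferentiableAt ℝ F v := by
    have : ContDiffAt ℝ 1 F v :=
      hFsmooth.contDiffAt (isOpen_compl_singleton.mem_nhds (by simpa using hv))
    exact this.differentiableAt one_ne_zero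
  exact hA.hasFDerivAt

theorem ell_eq (hFsmooth : ContDiffOn ℝ 1 F {(0 : E)}ᶜ)
    (hℓ : ∀ v : E, v ≠ 0 → ℓ v = (1 / 2 : ℝ) • fderiv ℝ (fun w => F w ^ 2) v)
    {v : E} (hv : v ≠ 0) : ℓ v = F v • fderiv ℝ F v := by
  have hd := F_hasFDerivAt hFsmooth hv
  have hsq : HasFDerivAt (fun w => F w ^ 2) ((2 * F v) • fderiv ℝ F v) v := by
    have := hd.mul hd
    have heq : (F * F) = fun w => F w ^ 2 := by ext w; rw [Pi.mul_apply]; ring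
    rw [heq] at this
    rw [two_mul, add_smul]
    exact this
  rw [hℓ v hv, hsq.fderiv]
  module

theorem ell_self (hGF : GaugeFacts F) (hFsmooth : ContDiffOn ℝ 1 F {(0 : E)}ᶜ)
    (hℓ : ∀ v : E, v ≠ 0 → ℓ v = (1 / 2 : ℝ) • fderiv ℝ (fun w => F w ^ 2) v)
    {v : E} (hv : v ≠ 0) : (ℓ v) v = F v ^ 2 := by
  rw [ell_eq hFsmooth hℓ hv]
  have he : (fderiv ℝ F v) v = F v := euler_identity hGF.smul (F_hasFDerivAt hFsmooth hv)
  have : (F v • fderiv ℝ F v) v = F v * (fderiv ℝ F v) v := rfl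
  rw [this, he]
  ring

theorem Fs_ell_le (hGF : GaugeFacts F) (hFsmooth : ContDiffOn ℝ 1 F {(0 : E)}ᶜ)
    (hFs : Fs = fun ξ : E →L[ℝ] ℝ => sSup (⇑ξ '' {y | F y ≤ 1}))
    (hℓ : ∀ v : E, v ≠ 0 → ℓ v = (1 / 2 : ℝ) • fderiv ℝ (fun w => F w ^ 2) v)
    {v : E} (hv : v ≠ 0) : Fs (ℓ v) ≤ F v := by
  refine Fs_le hGF hFs _ (fun y hy => ?_)
  rw [ell_eq hFsmooth hℓ hv]
  have hgrad := convexOn_fderiv_le hGF.convexOn (F_hasFDerivAt hFsmooth hv) y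
  have he : (fderiv ℝ F v) v = F v := euler_identity hGF.smul (F_hasFDerivAt hFsmooth hv)
  have h1 : (fderiv ℝ F v) y ≤ F y := by
    have : (fderiv ℝ F v) (y - v) = (fderiv ℝ F v) y - (fderiv ℝ F v) v := by
      simp [map_sub]
    rw [this, he] at hgrad
    linarith
  have hFv := hGF.pos hv
  calc (F v • fderiv ℝ F v) y = F v * (fderiv ℝ F v) y := rfl
    _ ≤ F v * F y := by nlinarith
    _ ≤ F v := by nlinarith [hGF.nonneg y]
end L3b


noncomputable def PhiFn {E : Type*} [NormedAddCommGroup E] [MeasurableSpace E]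
    (F : E → ℝ) (μ : MeasureTheory.Measure E) (y : E) : ℝ := ∫ z, F (z - y) ∂μ

section L4
variable {E : Type*} [NormedAddCommGroup E] [NormedSpace ℝ E] [ProperSpace E]
  [MeasurableSpace E] [BorelSpace E]
variable {F : E → ℝ} {C : ℝ} {x₀ : E} {R : ℝ} {μ : Measure E}

theorem ae_ball (hsupp : μ {z | F (z - x₀) ≤ R}ᶜ = 0) :
    ∀ᵐ z ∂μ, F (z - x₀) ≤ R := by
  rw [MeasureTheory.ae_iff]
  rw [show {a : E | ¬ F (a - x₀) ≤ R} = {z : E | F (z - x₀) ≤ R}ᶜ from by ext z; simp]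
  exact hsupp

theorem integrable_F_sub [IsFiniteMeasure μ] (hGF : GaugeFacts F)
    (hsupp : μ {z | F (z - x₀) ≤ R}ᶜ = 0) (y : E) :
    Integrable (fun z => F (z - y)) μ := by
  have hmeas : AEStronglyMeasurable (fun z => F (z - y)) μ :=
    (hGF.continuous.comp (continuous_id.sub continuous_const)).aestronglyMeasurable
  refine Integrable.mono' (integrable_const (R + F (x₀ - y))) hmeas ?_
  filter_upwards [ae_ball hsupp] with z hz
  rw [Real.norm_of_nonneg (hGF.nonneg _)]
  have := hGF.add_le (z - x₀) (x₀ - y)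
  simp only [sub_add_sub_cancel] at this
  linarith

theorem PhiFn_nonneg [IsProbabilityMeasure μ] (hGF : GaugeFacts F) (y : E) :
    0 ≤ PhiFn F μ y :=
  integral_nonneg fun z => hGF.nonneg _

theorem PhiFn_x₀_le [IsProbabilityMeasure μ] (hGF : GaugeFacts F)
    (hsupp : μ {z | F (z - x₀) ≤ R}ᶜ = 0) : PhiFn F μ x₀ ≤ R := by
  have h := integral_mono_ae (integrable_F_sub hGF hsupp x₀) (integrable_const R)
    (ae_ball hsupp)
  simpa [PhiFn] using h

theorem PhiFn_lipschitz [IsProbabilityMeasure μ] (hGF : GaugeFacts F)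
    (hsupp : μ {z | F (z - x₀) ≤ R}ᶜ = 0) :
    ∃ β : ℝ, 0 < β ∧ ∀ y y' : E, |PhiFn F μ y - PhiFn F μ y'| ≤ β * ‖y - y'‖ := by
  obtain ⟨β, hβ, habs⟩ := hGF.abs_sub_le
  refine ⟨β, hβ, fun y y' => ?_⟩
  have hsub : PhiFn F μ y - PhiFn F μ y' = ∫ z, (F (z - y) - F (z - y')) ∂μ :=
    (integral_sub (integrable_F_sub hGF hsupp y) (integrable_F_sub hGF hsupp y')).symm
  rw [hsub]
  calc |∫ z, (F (z - y) - F (z - y')) ∂μ| ≤ ∫ z, |F (z - y) - F (z - y')| ∂μ := by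
        simpa [Real.norm_eq_abs] using
          norm_integral_le_integral_norm (fun z => F (z - y) - F (z - y')) (μ := μ)
    _ ≤ ∫ _z, β * ‖y - y'‖ ∂μ := by
        refine integral_mono_ae ?_ (integrable_const _) (Filter.Eventually.of_forall fun z => ?_)
        · exact ((integrable_F_sub hGF hsupp y).sub (integrable_F_sub hGF hsupp y')).abs
        · have h2 := habs (z - y) (z - y')
          have he : (z - y) - (z - y') = y' - y := by abel
          rw [he] at h2
          rw [← norm_neg (y' - y), neg_sub y' y] at h2
          exact h2
    _ = β * ‖y - y'‖ := by simp

theorem PhiFn_continuous [IsProbabilityMeasure μ] (hGF : GaugeFacts F)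
    (hsupp : μ {z | F (z - x₀) ≤ R}ᶜ = 0) : Continuous (PhiFn F μ) := by
  obtain ⟨β, hβ, h⟩ := PhiFn_lipschitz hGF hsupp
  refine (LipschitzWith.of_dist_le_mul (K := Real.toNNReal β) fun y y' => ?_).continuous
  rw [Real.dist_eq, dist_eq_norm, Real.coe_toNNReal β hβ.le]
  exact h y y'

theorem PhiFn_lower [IsProbabilityMeasure μ] (hGF : GaugeFacts F) (hC : 1 ≤ C)
    (hrev : ∀ v, F (-v) ≤ C * F v)
    (hsupp : μ {z | F (z - x₀) ≤ R}ᶜ = 0) (y : E) :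
    F (x₀ - y) ≤ C * R + PhiFn F μ y := by
  have key : ∀ᵐ z ∂μ, F (x₀ - y) ≤ C * R + F (z - y) := by
    filter_upwards [ae_ball hsupp] with z hz
    have h1 := hGF.add_le (x₀ - z) (z - y)
    simp only [sub_add_sub_cancel] at h1
    have h2 : F (x₀ - z) ≤ C * F (z - x₀) := by
      have := hrev (z - x₀)
      rwa [neg_sub] at this
    have hCR : C * F (z - x₀) ≤ C * R := by nlinarith
    linarith
  have h := integral_mono_ae (integrable_const (F (x₀ - y)))
    ((integrable_const (C * R)).add (integrable_F_sub hGF hsupp y)) key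
  simpa [integral_add (integrable_const (C * R)) (integrable_F_sub hGF hsupp y), PhiFn]
    using h

theorem ball_compact (hGF : GaugeFacts F) (r : ℝ) :
    IsCompact {y : E | F (y - x₀) ≤ r} := by
  obtain ⟨α, hα, hl⟩ := hGF.lower
  have hb : Bornology.IsBounded {y : E | F (y - x₀) ≤ r} := by
    refine (Metric.isBounded_closedBall (x := x₀) (r := r/α)).subset ?_
    intro y hy
    simp only [mem_setOf_eq] at hy
    simp only [Metric.mem_closedBall, dist_eq_norm]
    rw [le_div_iff₀ hα, mul_comm]
    exact (hl (y - x₀)).trans hy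
  exact Metric.isCompact_of_isClosed_isBounded
    (isClosed_le (hGF.continuous.comp (continuous_id.sub continuous_const)) continuous_const) hb

theorem ball_convex (hGF : GaugeFacts F) (r : ℝ) :
    Convex ℝ {y : E | F (y - x₀) ≤ r} := by
  have hc : ConvexOn ℝ Set.univ (fun y : E => F (y - x₀)) := by
    refine ⟨convex_univ, fun u _ w _ a b ha hb hab => ?_⟩
    have harg : (a • u + b • w) - x₀ = a • (u - x₀) + b • (w - x₀) := by
      rw [smul_sub, smul_sub]
      rw [show a • u - a • x₀ + (b • w - b • x₀) = a • u + b • w - (a + b) • x₀ by module]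
      rw [hab, one_smul]
    show F ((a • u + b • w) - x₀) ≤ _
    rw [harg]
    calc F (a • (u - x₀) + b • (w - x₀)) ≤ F (a • (u - x₀)) + F (b • (w - x₀)) :=
          hGF.add_le _ _
      _ = a * F (u - x₀) + b * F (w - x₀) := by rw [hGF.smul a ha, hGF.smul b hb]
      _ = a • F (u - x₀) + b • F (w - x₀) := rfl
  have := hc.convex_le r
  simpa [Set.sep_univ] using this

end L4

section L5
variable {n : ℕ} {F : EuclideanSpace ℝ (Fin n) → ℝ} {C : ℝ}
  {x₀ : EuclideanSpace ℝ (Fin n)} {R : ℝ} {μ : Measure (EuclideanSpace ℝ (Fin n))}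

theorem nu_le (μ : Measure (EuclideanSpace ℝ (Fin n))) (w : EuclideanSpace ℝ (Fin n)) :
    μ {w} • Measure.dirac w ≤ μ := by
  rw [Measure.le_iff']
  intro s
  rw [Measure.smul_apply, Measure.dirac_apply, smul_eq_mul]
  by_cases hw : w ∈ s
  · rw [Set.indicator_of_mem hw]
    simpa using measure_mono (Set.singleton_subset_iff.mpr hw)
  · simp [Set.indicator_of_notMem hw]

theorem nu_finite [IsFiniteMeasure μ] (w : EuclideanSpace ℝ (Fin n)) :
    IsFiniteMeasure (μ {w} • Measure.dirac w) := by
  constructor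
  rw [Measure.smul_apply, smul_eq_mul]
  calc μ {w} * Measure.dirac w Set.univ ≤ μ {w} * 1 := by
        exact mul_le_mul_right (by simp) _
    _ < ⊤ := by simpa using (measure_lt_top μ {w})

theorem sub_nu_singleton [IsFiniteMeasure μ] (w : EuclideanSpace ℝ (Fin n)) :
    (μ - μ {w} • Measure.dirac w) {w} = 0 := by
  haveI := nu_finite (μ := μ) w
  rw [Measure.sub_apply (measurableSet_singleton w) (nu_le μ w)]
  rw [Measure.smul_apply, Measure.dirac_apply, smul_eq_mul,
    Set.indicator_of_mem (Set.mem_singleton w)]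
  simp [tsub_self]

theorem ae_ne_of_sub (w : EuclideanSpace ℝ (Fin n)) [IsFiniteMeasure μ] :
    ∀ᵐ z ∂(μ - μ {w} • Measure.dirac w), z ≠ w := by
  rw [MeasureTheory.ae_iff]
  rw [show {a : EuclideanSpace ℝ (Fin n) | ¬ a ≠ w} = {w} from by ext z; simp]
  exact sub_nu_singleton w

/-- Decomposition `∫ f dμ = ∫ f d(μ - μ{w}δ_w) + μ{w} f(w)` for integrable continuous `f`. -/
theorem integral_decomp [IsFiniteMeasure μ] {f : EuclideanSpace ℝ (Fin n) → ℝ}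
    (hf : Continuous f) (hint : Integrable f μ) (w : EuclideanSpace ℝ (Fin n)) :
    ∫ z, f z ∂μ = (∫ z, f z ∂(μ - μ {w} • Measure.dirac w)) + (μ {w}).toReal * f w := by
  haveI := nu_finite (μ := μ) w
  have hsplit : μ = (μ - μ {w} • Measure.dirac w) + μ {w} • Measure.dirac w :=
    (Measure.sub_add_cancel_of_le (nu_le μ w)).symm
  have h1 : Integrable f (μ - μ {w} • Measure.dirac w) :=
    hint.mono_measure Measure.sub_le
  have h2 : Integrable f (μ {w} • Measure.dirac w) :=
    hint.mono_measure (nu_le μ w)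
  calc ∫ z, f z ∂μ = ∫ z, f z ∂((μ - μ {w} • Measure.dirac w) + μ {w} • Measure.dirac w) := by
        rw [← hsplit]
    _ = (∫ z, f z ∂(μ - μ {w} • Measure.dirac w)) + ∫ z, f z ∂(μ {w} • Measure.dirac w) :=
        integral_add_measure h1 h2
    _ = (∫ z, f z ∂(μ - μ {w} • Measure.dirac w)) + (μ {w}).toReal * f w := by
        rw [integral_smul_measure, integral_dirac, smul_eq_mul]

/-- The functional `PhiFn F ν` is convex. -/
theorem PhiFn_convexOn {ν : Measure (EuclideanSpace ℝ (Fin n))} (hGF : GaugeFacts F)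
    (hint : ∀ y, Integrable (fun z => F (z - y)) ν) :
    ConvexOn ℝ Set.univ (PhiFn F ν) := by
  refine ⟨convex_univ, fun u _ w _ a b ha hb hab => ?_⟩
  have hpt : ∀ z, F (z - (a • u + b • w)) ≤ a * F (z - u) + b * F (z - w) := by
    intro z
    have harg : z - (a • u + b • w) = a • (z - u) + b • (z - w) := by
      rw [smul_sub, smul_sub]
      rw [show a • z - a • u + (b • z - b • w) = (a + b) • z - (a • u + b • w) by module]
      rw [hab, one_smul]
    rw [harg]
    calc F (a • (z - u) + b • (z - w)) ≤ F (a • (z - u)) + F (b • (z - w)) := hGF.add_le _ _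
      _ = a * F (z - u) + b * F (z - w) := by rw [hGF.smul a ha, hGF.smul b hb]
  have hle : PhiFn F ν (a • u + b • w) ≤ ∫ z, (a * F (z - u) + b * F (z - w)) ∂ν := by
    refine integral_mono_ae (hint _) ?_ (Filter.Eventually.of_forall hpt)
    exact ((hint u).const_mul a).add ((hint w).const_mul b)
  calc PhiFn F ν (a • u + b • w) ≤ ∫ z, (a * F (z - u) + b * F (z - w)) ∂ν := hle
    _ = a * PhiFn F ν u + b * PhiFn F ν w := by
        rw [integral_add ((hint u).const_mul a) ((hint w).const_mul b)]
        have e1 : ∫ z, a * F (z - u) ∂ν = a * PhiFn F ν u := by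
          simpa [smul_eq_mul, PhiFn] using integral_smul a (fun z => F (z - u)) (μ := ν)
        have e2 : ∫ z, b * F (z - w) ∂ν = b * PhiFn F ν w := by
          simpa [smul_eq_mul, PhiFn] using integral_smul b (fun z => F (z - w)) (μ := ν)
        rw [e1, e2]
    _ = a • PhiFn F ν u + b • PhiFn F ν w := rfl

/-- `G x` (the median functional with the atom at `x` removed) is differentiable at `x`. -/
theorem G_hasFDerivAt [IsProbabilityMeasure μ] (hGF : GaugeFacts F)
    (hFsmooth : ContDiffOn ℝ 1 F {(0 : EuclideanSpace ℝ (Fin n))}ᶜ)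
    (hsupp : μ {z | F (z - x₀) ≤ R}ᶜ = 0) (w : EuclideanSpace ℝ (Fin n)) :
    HasFDerivAt (fun y => ∫ z, F (z - y) ∂(μ - μ {w} • Measure.dirac w))
      (∫ z, -(fderiv ℝ F (z - w)) ∂(μ - μ {w} • Measure.dirac w)) w := by
  set ν := μ - μ {w} • Measure.dirac w with hν
  haveI : IsFiniteMeasure ν := by
    rw [hν]; exact Measure.isFiniteMeasure_sub
  obtain ⟨β, hβ, hlip⟩ := hGF.abs_sub_le
  have hmain := hasFDerivAt_integral_of_dominated_loc_of_lip
    (F := fun (y : EuclideanSpace ℝ (Fin n)) (z : EuclideanSpace ℝ (Fin n)) => F (z - y))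
    (F' := fun z => -(fderiv ℝ F (z - w))) (x₀ := w) (bound := fun _ => β)
    (μ := ν) (Metric.ball_mem_nhds w one_pos) ?_ ?_ ?_ ?_ ?_ ?_
  · exact hmain.2
  · refine Filter.Eventually.of_forall fun y => ?_
    exact (hGF.continuous.comp (continuous_id.sub continuous_const)).aestronglyMeasurable
  · exact (integrable_F_sub hGF hsupp w).mono_measure Measure.sub_le
  · refine Measurable.aestronglyMeasurable ?_
    exact ((measurable_fderiv ℝ F).comp (measurable_id.sub measurable_const)).neg
  · refine Filter.Eventually.of_forall fun z => ?_
    have : LipschitzWith (Real.nnabs β) (fun y : EuclideanSpace ℝ (Fin n) => F (z - y)) := by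
      refine LipschitzWith.of_dist_le_mul fun u v => ?_
      rw [Real.dist_eq, dist_eq_norm]
      have h2 := hlip (z - u) (z - v)
      have he : (z - u) - (z - v) = v - u := by abel
      rw [he] at h2
      have hc : (Real.nnabs β : ℝ) = β := by
        simp [Real.coe_nnabs, abs_of_pos hβ]
      rw [hc, ← norm_neg (v - u), neg_sub v u] at *
      exact h2
    show LipschitzOnWith (Real.nnabs β) (fun y => F (z - y)) (Metric.ball w 1)
    exact (lipschitzOnWith_univ.mpr this).mono (Set.subset_univ _)
  · exact integrable_const β
  · filter_upwards [ae_ne_of_sub w] with z hz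
    have h1 : HasFDerivAt (fun x : EuclideanSpace ℝ (Fin n) => z - x)
        (-(ContinuousLinearMap.id ℝ (EuclideanSpace ℝ (Fin n)))) w :=
      (hasFDerivAt_id w).const_sub z
    have h2 : HasFDerivAt F (fderiv ℝ F (z - w)) (z - w) :=
      F_hasFDerivAt hFsmooth (sub_ne_zero.mpr hz)
    have := h2.comp w h1
    convert this using 1
    ext u
    simp
    ext u
    simp

end L5

section L6
variable {n : ℕ} {F : EuclideanSpace ℝ (Fin n) → ℝ}
  {Fs : (EuclideanSpace ℝ (Fin n) →L[ℝ] ℝ) → ℝ} {C : ℝ}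
  {x₀ : EuclideanSpace ℝ (Fin n)} {R : ℝ} {μ : Measure (EuclideanSpace ℝ (Fin n))}

/-- If the stopping condition holds at a point, that point is a global minimizer of `Φ`. -/
theorem stop_point_isMin [IsProbabilityMeasure μ] (hGF : GaugeFacts F)
    (hFsmooth : ContDiffOn ℝ 1 F {(0 : EuclideanSpace ℝ (Fin n))}ᶜ)
    (hsupp : μ {z | F (z - x₀) ≤ R}ᶜ = 0)
    (hFs : Fs = fun ξ : EuclideanSpace ℝ (Fin n) →L[ℝ] ℝ => sSup (⇑ξ '' {y | F y ≤ 1}))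
    (x : EuclideanSpace ℝ (Fin n))
    (hq : Fs (fderiv ℝ (fun y => ∫ z, F (z - y) ∂(μ - μ {x} • Measure.dirac x)) x)
      ≤ (μ {x}).toReal) :
    ∀ y, PhiFn F μ x ≤ PhiFn F μ y := by
  intro y
  set ν := μ - μ {x} • Measure.dirac x with hν
  haveI : IsFiniteMeasure ν := Measure.isFiniteMeasure_sub
  have hD : HasFDerivAt (fun y => ∫ z, F (z - y) ∂ν)
      (∫ z, -(fderiv ℝ F (z - x)) ∂ν) x := G_hasFDerivAt hGF hFsmooth hsupp x
  set ξ := ∫ z, -(fderiv ℝ F (z - x)) ∂ν with hξ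
  have hfd : fderiv ℝ (fun y => ∫ z, F (z - y) ∂ν) x = ξ := hD.fderiv
  rw [hfd] at hq
  have hint : ∀ y', Integrable (fun z => F (z - y')) ν :=
    fun y' => (integrable_F_sub hGF hsupp y').mono_measure Measure.sub_le
  have hconv : ConvexOn ℝ Set.univ (PhiFn F ν) := PhiFn_convexOn hGF hint
  have hgrad : PhiFn F ν x + ξ (y - x) ≤ PhiFn F ν y := convexOn_fderiv_le hconv hD y
  have hdual : ξ (x - y) ≤ Fs ξ * F (x - y) := apply_le_Fs hGF hFs ξ (x - y)
  have hξxy : ξ (y - x) = -(ξ (x - y)) := by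
    rw [← map_neg]
    congr 1
    abel
  have hdecy : PhiFn F μ y = PhiFn F ν y + (μ {x}).toReal * F (x - y) :=
    integral_decomp (hGF.continuous.comp (continuous_id.sub continuous_const))
      (integrable_F_sub hGF hsupp y) x
  have hdecx : PhiFn F μ x = PhiFn F ν x := by
    have := integral_decomp (f := fun z => F (z - x))
      (hGF.continuous.comp (continuous_id.sub continuous_const))
      (integrable_F_sub hGF hsupp x) x
    simpa [hGF.zero, PhiFn] using this
  have hFnn : 0 ≤ F (x - y) := hGF.nonneg _
  have hFsnn : 0 ≤ Fs ξ := Fs_nonneg hGF hFs ξ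
  nlinarith [mul_le_mul_of_nonneg_right hq hFnn]

/-- Strict midpoint inequality for the median functional. -/
theorem phi_midpoint_lt [IsProbabilityMeasure μ] (hGF : GaugeFacts F)
    (hsupp : μ {z | F (z - x₀) ≤ R}ᶜ = 0)
    (hnotline : ¬ ∃ a b : EuclideanSpace ℝ (Fin n),
      μ {z | ∃ t : ℝ, z = a + t • b}ᶜ = 0)
    (hconv : ∀ z, F (z - x₀) ≤ R →
      ∀ x y : EuclideanSpace ℝ (Fin n),
        F (x - x₀) ≤ C * (1 + C) * R → F (y - x₀) ≤ C * (1 + C) * R → x ≠ y →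
        (∀ t : ℝ, x + t • (y - x) ≠ z) →
        StrictConvexOn ℝ (segment ℝ x y) (fun w => F (z - w)))
    {x y : EuclideanSpace ℝ (Fin n)} (hx : F (x - x₀) ≤ C * (1 + C) * R)
    (hy : F (y - x₀) ≤ C * (1 + C) * R) (hxy : x ≠ y) :
    PhiFn F μ ((1/2 : ℝ) • x + (1/2 : ℝ) • y)
      < (1/2 : ℝ) * PhiFn F μ x + (1/2 : ℝ) * PhiFn F μ y := by
  set m := (1/2 : ℝ) • x + (1/2 : ℝ) • y with hm
  set g : EuclideanSpace ℝ (Fin n) → ℝ :=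
    fun z => (1/2 : ℝ) * F (z - x) + (1/2 : ℝ) * F (z - y) - F (z - m) with hg
  have hgnn : ∀ z, 0 ≤ g z := by
    intro z
    have harg : z - m = (1/2 : ℝ) • (z - x) + (1/2 : ℝ) • (z - y) := by
      rw [hm]; module
    have : F (z - m) ≤ (1/2 : ℝ) * F (z - x) + (1/2 : ℝ) * F (z - y) := by
      rw [harg]
      calc F ((1/2 : ℝ) • (z - x) + (1/2 : ℝ) • (z - y))
          ≤ F ((1/2 : ℝ) • (z - x)) + F ((1/2 : ℝ) • (z - y)) := hGF.add_le _ _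
        _ = (1/2 : ℝ) * F (z - x) + (1/2 : ℝ) * F (z - y) := by
            rw [hGF.smul _ (by norm_num), hGF.smul _ (by norm_num)]
    simp only [hg]
    linarith
  have hintx := integrable_F_sub hGF hsupp x
  have hinty := integrable_F_sub hGF hsupp y
  have hintm := integrable_F_sub hGF hsupp m
  have hgint : Integrable g μ := ((hintx.const_mul _).add (hinty.const_mul _)).sub hintm
  have hgval : ∫ z, g z ∂μ =
      (1/2 : ℝ) * PhiFn F μ x + (1/2 : ℝ) * PhiFn F μ y - PhiFn F μ m := by
    rw [hg]
    have hs1 : ∫ z, ((1/2 : ℝ) * F (z - x) + (1/2 : ℝ) * F (z - y) - F (z - m)) ∂μ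
        = (∫ z, ((1/2 : ℝ) * F (z - x) + (1/2 : ℝ) * F (z - y)) ∂μ) - ∫ z, F (z - m) ∂μ :=
      integral_sub ((hintx.const_mul _).add (hinty.const_mul _)) hintm
    have hs2 : ∫ z, ((1/2 : ℝ) * F (z - x) + (1/2 : ℝ) * F (z - y)) ∂μ
        = (∫ z, (1/2 : ℝ) * F (z - x) ∂μ) + ∫ z, (1/2 : ℝ) * F (z - y) ∂μ :=
      integral_add (hintx.const_mul _) (hinty.const_mul _)
    rw [hs1, hs2]
    have e1 : ∫ z, (1/2 : ℝ) * F (z - x) ∂μ = (1/2 : ℝ) * PhiFn F μ x := by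
      simpa [smul_eq_mul, PhiFn] using integral_smul (1/2 : ℝ) (fun z => F (z - x)) (μ := μ)
    have e2 : ∫ z, (1/2 : ℝ) * F (z - y) ∂μ = (1/2 : ℝ) * PhiFn F μ y := by
      simpa [smul_eq_mul, PhiFn] using integral_smul (1/2 : ℝ) (fun z => F (z - y)) (μ := μ)
    rw [e1, e2]
    rfl
  -- the set where strict convexity holds has positive measure
  set L : Set (EuclideanSpace ℝ (Fin n)) := {z | ∃ t : ℝ, z = x + t • (y - x)} with hL
  have hLpos : μ Lᶜ ≠ 0 := by
    intro hc
    exact hnotline ⟨x, y - x, hc⟩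
  have hposset : μ (Lᶜ ∩ {z | F (z - x₀) ≤ R}) ≠ 0 := by
    intro hc
    have hsub : Lᶜ ⊆ (Lᶜ ∩ {z | F (z - x₀) ≤ R}) ∪ {z | F (z - x₀) ≤ R}ᶜ := by
      intro z hz
      by_cases hzb : F (z - x₀) ≤ R
      · exact Or.inl ⟨hz, hzb⟩
      · exact Or.inr hzb
    have hle2 : μ Lᶜ ≤ μ (Lᶜ ∩ {z | F (z - x₀) ≤ R}) + μ {z | F (z - x₀) ≤ R}ᶜ :=
      (measure_mono hsub).trans (measure_union_le _ _)
    rw [hc, hsupp] at hle2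
    simpa using hLpos (le_antisymm (by simpa using hle2) zero_le)
  have hgpos : ∀ z ∈ Lᶜ ∩ {z | F (z - x₀) ≤ R}, 0 < g z := by
    rintro z ⟨hzL, hzb⟩
    have hline : ∀ t : ℝ, x + t • (y - x) ≠ z := by
      intro t hc
      exact hzL ⟨t, hc.symm⟩
    have hsco := hconv z hzb x y hx hy hxy hline
    have hlt := hsco.2 (left_mem_segment ℝ x y) (right_mem_segment ℝ x y) hxy
      (by norm_num : (0:ℝ) < 1/2) (by norm_num : (0:ℝ) < 1/2) (by norm_num)
    simp only [hg, hm]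
    simp only [smul_eq_mul] at hlt
    linarith [hlt]
  -- conclude positivity of the integral
  have hge : 0 ≤ ∫ z, g z ∂μ := integral_nonneg hgnn
  have hne : ∫ z, g z ∂μ ≠ 0 := by
    intro hc
    have hzero : g =ᵐ[μ] 0 :=
      (integral_eq_zero_iff_of_nonneg (fun z => hgnn z) hgint).mp hc
    have : μ {z | g z ≠ 0} = 0 := by
      rw [Filter.EventuallyEq] at hzero
      rw [MeasureTheory.ae_iff] at hzero
      simpa using hzero
    refine hposset (measure_mono_null ?_ this)
    intro z hz
    exact (hgpos z hz).ne'
  have : 0 < ∫ z, g z ∂μ := lt_of_le_of_ne hge (Ne.symm hne)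
  rw [hgval] at this
  linarith

end L6

noncomputable def xiFn {n : ℕ} (F : EuclideanSpace ℝ (Fin n) → ℝ)
    (μ : Measure (EuclideanSpace ℝ (Fin n))) (x : EuclideanSpace ℝ (Fin n)) :
    EuclideanSpace ℝ (Fin n) →L[ℝ] ℝ :=
  ∫ z, -(fderiv ℝ F (z - x)) ∂(μ - μ {x} • Measure.dirac x)

section L7
variable {n : ℕ} {F : EuclideanSpace ℝ (Fin n) → ℝ}
  {Fs : (EuclideanSpace ℝ (Fin n) →L[ℝ] ℝ) → ℝ} {C : ℝ}
  {ℓ : EuclideanSpace ℝ (Fin n) → (EuclideanSpace ℝ (Fin n) →L[ℝ] ℝ)}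
  {ℓinv : (EuclideanSpace ℝ (Fin n) →L[ℝ] ℝ) → EuclideanSpace ℝ (Fin n)}
  {x₀ : EuclideanSpace ℝ (Fin n)} {R : ℝ} {μ : Measure (EuclideanSpace ℝ (Fin n))}

theorem xiFn_hasFDerivAt [IsProbabilityMeasure μ] (hGF : GaugeFacts F)
    (hFsmooth : ContDiffOn ℝ 1 F {(0 : EuclideanSpace ℝ (Fin n))}ᶜ)
    (hsupp : μ {z | F (z - x₀) ≤ R}ᶜ = 0) (x : EuclideanSpace ℝ (Fin n)) :
    HasFDerivAt (fun y => ∫ z, F (z - y) ∂(μ - μ {x} • Measure.dirac x)) (xiFn F μ x) x :=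
  G_hasFDerivAt hGF hFsmooth hsupp x

/-- General first-order lower bound for the median functional. -/
theorem phi_lower_bound [IsProbabilityMeasure μ] (hGF : GaugeFacts F)
    (hFsmooth : ContDiffOn ℝ 1 F {(0 : EuclideanSpace ℝ (Fin n))}ᶜ)
    (hsupp : μ {z | F (z - x₀) ≤ R}ᶜ = 0)
    (hFs : Fs = fun ξ : EuclideanSpace ℝ (Fin n) →L[ℝ] ℝ => sSup (⇑ξ '' {y | F y ≤ 1}))
    (x y : EuclideanSpace ℝ (Fin n)) :
    PhiFn F μ x + ((μ {x}).toReal - Fs (xiFn F μ x)) * F (x - y) ≤ PhiFn F μ y := by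
  set ν := μ - μ {x} • Measure.dirac x with hν
  haveI : IsFiniteMeasure ν := Measure.isFiniteMeasure_sub
  have hD : HasFDerivAt (fun y => ∫ z, F (z - y) ∂ν) (xiFn F μ x) x :=
    xiFn_hasFDerivAt hGF hFsmooth hsupp x
  set ξ := xiFn F μ x with hξ
  have hint : ∀ y', Integrable (fun z => F (z - y')) ν :=
    fun y' => (integrable_F_sub hGF hsupp y').mono_measure Measure.sub_le
  have hconv : ConvexOn ℝ Set.univ (PhiFn F ν) := PhiFn_convexOn hGF hint
  have hgrad : PhiFn F ν x + ξ (y - x) ≤ PhiFn F ν y := convexOn_fderiv_le hconv hD y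
  have hdual : ξ (x - y) ≤ Fs ξ * F (x - y) := apply_le_Fs hGF hFs ξ (x - y)
  have hξxy : ξ (y - x) = -(ξ (x - y)) := by
    rw [← map_neg]; congr 1; abel
  have hdecy : PhiFn F μ y = PhiFn F ν y + (μ {x}).toReal * F (x - y) :=
    integral_decomp (hGF.continuous.comp (continuous_id.sub continuous_const))
      (integrable_F_sub hGF hsupp y) x
  have hdecx : PhiFn F μ x = PhiFn F ν x := by
    have := integral_decomp (f := fun z => F (z - x))
      (hGF.continuous.comp (continuous_id.sub continuous_const))
      (integrable_F_sub hGF hsupp x) x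
    simpa [hGF.zero, PhiFn] using this
  nlinarith [hGF.nonneg (x - y)]

/-- Right slope limit of `Φ ∘ γ` at a point where the flow ODE holds. -/
theorem flow_slope [IsProbabilityMeasure μ] (hGF : GaugeFacts F)
    (hFsmooth : ContDiffOn ℝ 1 F {(0 : EuclideanSpace ℝ (Fin n))}ᶜ)
    (hsupp : μ {z | F (z - x₀) ≤ R}ᶜ = 0)
    (hℓ : ∀ v, v ≠ 0 → ℓ v = (1 / 2 : ℝ) • fderiv ℝ (fun w => F w ^ 2) v)
    (hℓ0 : ℓ 0 = 0)
    (hright : Function.RightInverse ℓinv ℓ)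
    {γ : ℝ → EuclideanSpace ℝ (Fin n)} {a : ℝ}
    (hne : xiFn F μ (γ a) ≠ 0)
    (hd : HasDerivAt γ (-(ℓinv (xiFn F μ (γ a)))) a) :
    Filter.Tendsto (fun z => slope (fun t => PhiFn F μ (γ t)) a z) (nhdsWithin a (Set.Ioi a))
      (nhds (-(F (ℓinv (xiFn F μ (γ a))) ^ 2)
        + (μ {γ a}).toReal * F (ℓinv (xiFn F μ (γ a))))) := by
  set x := γ a with hx
  set ξ := xiFn F μ x with hξdef
  set vv := ℓinv ξ with hvvdef
  have hvv : vv ≠ 0 := by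
    intro hc
    apply hne
    have : ℓ vv = ξ := hright ξ
    rw [hc, hℓ0] at this
    exact this.symm
  have hℓvv : ℓ vv = ξ := hright ξ
  have hξvv : ξ vv = F vv ^ 2 := by
    rw [← hℓvv]
    exact ell_self hGF hFsmooth hℓ hvv
  set ν := μ - μ {x} • Measure.dirac x with hν
  haveI : IsFiniteMeasure ν := Measure.isFiniteMeasure_sub
  set m : ℝ := (μ {x}).toReal with hm
  -- decomposition of A
  have hdec : ∀ t : ℝ, PhiFn F μ (γ t) = PhiFn F ν (γ t) + m * F (x - γ t) := fun t =>
    integral_decomp (hGF.continuous.comp (continuous_id.sub continuous_const))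
      (integrable_F_sub hGF hsupp (γ t)) x
  have hdeca : PhiFn F μ (γ a) = PhiFn F ν (γ a) := by
    rw [hdec a, ← hx, sub_self, hGF.zero, mul_zero, add_zero]
  -- T1 : slope of t ↦ PhiFn F ν (γ t)
  have hg1 : HasDerivAt (fun t => PhiFn F ν (γ t)) (ξ (-(vv))) a := by
    have hD : HasFDerivAt (PhiFn F ν) ξ x := xiFn_hasFDerivAt hGF hFsmooth hsupp x
    exact hD.comp_hasDerivAt a hd
  have hT1 : Filter.Tendsto (fun z => slope (fun t => PhiFn F ν (γ t)) a z)
      (nhdsWithin a (Set.Ioi a)) (nhds (-(F vv ^ 2))) := by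
    have := (hasDerivAt_iff_tendsto_slope.mp hg1).mono_left
      (nhdsWithin_mono a (fun t (ht : t ∈ Set.Ioi a) => ne_of_gt ht))
    rw [show ξ (-(vv)) = -(F vv ^ 2) by rw [map_neg, hξvv]] at this
    exact this
  -- T2 : slope of the atom term
  have hT2 : Filter.Tendsto (fun z => (z - a)⁻¹ * F (x - γ z))
      (nhdsWithin a (Set.Ioi a)) (nhds (F vv)) := by
    have hsl : Filter.Tendsto (fun z => -((z - a)⁻¹ • (γ z - γ a)))
        (nhdsWithin a (Set.Ioi a)) (nhds vv) := by
      have h0 := (hasDerivAt_iff_tendsto_slope.mp hd).mono_left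
        (nhdsWithin_mono a (fun t (ht : t ∈ Set.Ioi a) => ne_of_gt ht))
      have h1 : Filter.Tendsto (fun z => -(slope γ a z)) (nhdsWithin a (Set.Ioi a))
          (nhds vv) := by
        have := h0.neg
        rw [neg_neg] at this
        exact this
      refine h1.congr (fun z => ?_)
      rw [slope_def_module]
    have hcont : Filter.Tendsto F (nhds vv) (nhds (F vv)) := hGF.continuous.tendsto vv
    have hcomp := hcont.comp hsl
    refine hcomp.congr' ?_
    filter_upwards [self_mem_nhdsWithin] with z (hz : z ∈ Set.Ioi a)
    have hza : (0:ℝ) < z - a := sub_pos.mpr hz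
    have : F (-((z - a)⁻¹ • (γ z - γ a))) = (z - a)⁻¹ * F (x - γ z) := by
      have harg : -((z - a)⁻¹ • (γ z - γ a)) = (z - a)⁻¹ • (x - γ z) := by
        rw [← smul_neg, hx]; congr 1; abel
      rw [harg, hGF.smul _ (by positivity)]
    rw [Function.comp_apply, this]
  -- combine
  have hsum := hT1.add (hT2.const_mul m)
  refine Filter.Tendsto.congr' ?_ hsum
  filter_upwards [self_mem_nhdsWithin] with z (hz : z ∈ Set.Ioi a)
  have hza : z - a ≠ 0 := ne_of_gt (sub_pos.mpr hz)
  show slope (fun t => PhiFn F ν (γ t)) a z + m * ((z - a)⁻¹ * F (x - γ z))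
      = slope (fun t => PhiFn F μ (γ t)) a z
  rw [slope_def_field, slope_def_field, hdec z, hdeca]
  field_simp
  ring
end L7

section L8
variable {n : ℕ} {F : EuclideanSpace ℝ (Fin n) → ℝ} {C : ℝ}
  {x₀ : EuclideanSpace ℝ (Fin n)} {R : ℝ} {μ : Measure (EuclideanSpace ℝ (Fin n))}

/-- Fencing: if all right slopes of `A` are eventually below `-ε` on `[T,b)`,
then `A t ≤ A T - ε (t - T)` on `[T,b]`. -/
theorem A_fence {A : ℝ → ℝ} (hAc : Continuous A) {T b ε : ℝ}
    (hslope : ∀ x ∈ Set.Ico T b, ∀ r : ℝ, -ε < r →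
      ∃ᶠ z in nhdsWithin x (Set.Ioi x), slope A x z < r) :
    ∀ t ∈ Set.Icc T b, A t ≤ A T - ε * (t - T) := by
  have hB' : ∀ x : ℝ, HasDerivAt (fun t => A T - ε * (t - T)) (-ε) x := by
    intro x
    have h1 : HasDerivAt (fun t : ℝ => ε * (t - T)) ε x := by
      simpa using ((hasDerivAt_id x).sub_const T).const_mul ε
    have h2 := (hasDerivAt_const x (A T)).sub h1
    rw [zero_sub] at h2
    exact h2
  exact image_le_of_liminf_slope_right_le_deriv_boundary hAc.continuousOn
    (by simp) (Continuous.continuousOn (by continuity))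
    (fun x _ => (hB' x).hasDerivWithinAt) hslope

/-- Uniqueness of minimizers of `Φ` over the big ball. -/
theorem min_unique [IsProbabilityMeasure μ] (hGF : GaugeFacts F)
    (hsupp : μ {z | F (z - x₀) ≤ R}ᶜ = 0)
    (hnotline : ¬ ∃ a b : EuclideanSpace ℝ (Fin n),
      μ {z | ∃ t : ℝ, z = a + t • b}ᶜ = 0)
    (hconv : ∀ z, F (z - x₀) ≤ R →
      ∀ x y : EuclideanSpace ℝ (Fin n),
        F (x - x₀) ≤ C * (1 + C) * R → F (y - x₀) ≤ C * (1 + C) * R → x ≠ y →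
        (∀ t : ℝ, x + t • (y - x) ≠ z) →
        StrictConvexOn ℝ (segment ℝ x y) (fun w => F (z - w)))
    {p q : EuclideanSpace ℝ (Fin n)}
    (hpB : F (p - x₀) ≤ C * (1 + C) * R)
    (hp : ∀ y, F (y - x₀) ≤ C * (1 + C) * R → PhiFn F μ p ≤ PhiFn F μ y)
    (hqB : F (q - x₀) ≤ C * (1 + C) * R)
    (hq : ∀ y, F (y - x₀) ≤ C * (1 + C) * R → PhiFn F μ q ≤ PhiFn F μ y) :
    p = q := by
  by_contra hne
  set mid := (1/2 : ℝ) • p + (1/2 : ℝ) • q with hmid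
  have hmidB : F (mid - x₀) ≤ C * (1 + C) * R := by
    have hpm : p ∈ {y : EuclideanSpace ℝ (Fin n) | F (y - x₀) ≤ C * (1 + C) * R} := hpB
    have hqm : q ∈ {y : EuclideanSpace ℝ (Fin n) | F (y - x₀) ≤ C * (1 + C) * R} := hqB
    exact (ball_convex (hGF := hGF) (x₀ := x₀) (C * (1 + C) * R)) hpm hqm
      (by norm_num : (0:ℝ) ≤ 1/2) (by norm_num : (0:ℝ) ≤ 1/2) (by norm_num)
  have hΦeq : PhiFn F μ p = PhiFn F μ q := le_antisymm (hp q hqB) (hq p hpB)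
  have hlt := phi_midpoint_lt hGF hsupp hnotline hconv hpB hqB hne
  have hmle := hp mid hmidB
  rw [← hΦeq] at hlt
  rw [hmid] at hmle
  linarith

/-- Sublevel-set trap around a unique minimizer. -/
theorem phi_trap [IsProbabilityMeasure μ] (hGF : GaugeFacts F)
    (hsupp : μ {z | F (z - x₀) ≤ R}ᶜ = 0) {r : ℝ}
    {mpt : EuclideanSpace ℝ (Fin n)}
    (hmin : ∀ y, F (y - x₀) ≤ r → PhiFn F μ mpt ≤ PhiFn F μ y)
    (huniq : ∀ q, F (q - x₀) ≤ r → PhiFn F μ q = PhiFn F μ mpt → q = mpt)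
    {ε : ℝ} (hε : 0 < ε) :
    ∃ d : ℝ, 0 < d ∧ ∀ x, F (x - x₀) ≤ r →
      PhiFn F μ x < PhiFn F μ mpt + d → dist x mpt < ε := by
  set Kε : Set (EuclideanSpace ℝ (Fin n)) :=
    {y | F (y - x₀) ≤ r} ∩ {y | ε ≤ dist y mpt} with hKε
  have hKcpt : IsCompact Kε :=
    (ball_compact hGF r).inter_right
      (isClosed_le continuous_const (continuous_id.dist continuous_const))
  rcases Set.eq_empty_or_nonempty Kε with hem | hne
  · refine ⟨1, one_pos, fun x hx _ => ?_⟩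
    by_contra hd
    have : x ∈ Kε := ⟨hx, not_lt.mp hd⟩
    rw [hem] at this
    exact this
  · obtain ⟨q, hqK, hqmin⟩ := hKcpt.exists_isMinOn hne
      (PhiFn_continuous hGF hsupp).continuousOn
    have hqB : F (q - x₀) ≤ r := hqK.1
    have hqgt : PhiFn F μ mpt < PhiFn F μ q := by
      rcases lt_or_ge (PhiFn F μ mpt) (PhiFn F μ q) with h | h
      · exact h
      · exfalso
        have heq : PhiFn F μ q = PhiFn F μ mpt := le_antisymm h (hmin q hqB)
        have := huniq q hqB heq
        rw [this] at hqK
        have := hqK.2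
        simp only [Set.mem_setOf_eq, dist_self] at this
        linarith
    refine ⟨PhiFn F μ q - PhiFn F μ mpt, by linarith, fun x hx hlt => ?_⟩
    by_contra hd
    have hxK : x ∈ Kε := ⟨hx, not_lt.mp hd⟩
    have := hqmin hxK
    simp only [Set.mem_setOf_eq] at this
    have : PhiFn F μ q ≤ PhiFn F μ x := this
    linarith

end L8

set_option maxHeartbeats 1600000 in
/-- Convergence of the (possibly stopped) gradient flow to the median
in the flat Minkowski model: under the hypotheses guaranteeing a unique median `m` of `μ`
in `B̄(x₀, C(1+C)R)`, the continuous path started at `x₀` which follows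
`γ'(a) = -ℓ⁻¹(D F_{μ_{γ(a)}}(γ(a)))` as long as `μ({γ(a')}) < F*(D F_{μ_{γ(a')}}(γ(a')))`
for all `a' ≤ a`, and stops once this fails, converges to `m` as `a → ∞`. -/
theorem median_gradient_flow_converges
    {n : ℕ} (K : Set (EuclideanSpace ℝ (Fin n)))
    (hK_cpt : IsCompact K) (hK_conv : Convex ℝ K)
    (hK_int : (0 : EuclideanSpace ℝ (Fin n)) ∈ interior K)
    (F : EuclideanSpace ℝ (Fin n) → ℝ) (hF : F = gauge K)
    (hFsmooth : ContDiffOn ℝ 1 F {(0 : EuclideanSpace ℝ (Fin n))}ᶜ)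
    (C : ℝ) (hC : 1 ≤ C) (hrev : ∀ v, F (-v) ≤ C * F v)
    (ℓ : EuclideanSpace ℝ (Fin n) → (EuclideanSpace ℝ (Fin n) →L[ℝ] ℝ))
    (hℓ : ∀ v, v ≠ 0 → ℓ v = (1 / 2 : ℝ) • fderiv ℝ (fun w => F w ^ 2) v)
    (hℓ0 : ℓ 0 = 0)
    (ℓinv : (EuclideanSpace ℝ (Fin n) →L[ℝ] ℝ) → EuclideanSpace ℝ (Fin n))
    (hleft : Function.LeftInverse ℓinv ℓ) (hright : Function.RightInverse ℓinv ℓ)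
    (hℓcont : Continuous ℓ) (hℓinvcont : Continuous ℓinv)
    (x₀ : EuclideanSpace ℝ (Fin n)) (R : ℝ) (hR : 0 < R)
    (μ : Measure (EuclideanSpace ℝ (Fin n))) [IsProbabilityMeasure μ]
    (hsupp : μ {z | F (z - x₀) ≤ R}ᶜ = 0)
    (hnotline : ¬ ∃ a b : EuclideanSpace ℝ (Fin n),
      μ {z | ∃ t : ℝ, z = a + t • b}ᶜ = 0)
    (hconv : ∀ z, F (z - x₀) ≤ R →
      ∀ x y : EuclideanSpace ℝ (Fin n),
        F (x - x₀) ≤ C * (1 + C) * R → F (y - x₀) ≤ C * (1 + C) * R → x ≠ y →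
        (∀ t : ℝ, x + t • (y - x) ≠ z) →
        StrictConvexOn ℝ (segment ℝ x y) (fun w => F (z - w)))
    -- `G w y = F_{μ_w}(y)`, the median functional of `μ` with the atom at `w` removed
    (G : EuclideanSpace ℝ (Fin n) → EuclideanSpace ℝ (Fin n) → ℝ)
    (hG : G = fun w y => ∫ z, F (z - y) ∂(μ - μ {w} • Measure.dirac w))
    -- `Fs` is the dual gauge `F*`
    (Fs : (EuclideanSpace ℝ (Fin n) →L[ℝ] ℝ) → ℝ)
    (hFs : Fs = fun ξ : EuclideanSpace ℝ (Fin n) →L[ℝ] ℝ =>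
      sSup (⇑ξ '' {y | F y ≤ 1}))
    (γ : ℝ → EuclideanSpace ℝ (Fin n)) (hγcont : Continuous γ) (hγ0 : γ 0 = x₀)
    (hflow : ∀ a : ℝ, 0 ≤ a →
      (∀ a' : ℝ, 0 ≤ a' → a' ≤ a →
        (μ {γ a'}).toReal < Fs (fderiv ℝ (G (γ a')) (γ a'))) →
      HasDerivAt γ (-(ℓinv (fderiv ℝ (G (γ a)) (γ a)))) a)
    (hstop : ∀ a : ℝ, 0 ≤ a →
      (∃ a' : ℝ, 0 ≤ a' ∧ a' ≤ a ∧
        Fs (fderiv ℝ (G (γ a')) (γ a')) ≤ (μ {γ a'}).toReal) →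
      HasDerivAt γ 0 a) :
    ∃ m : EuclideanSpace ℝ (Fin n),
      (F (m - x₀) ≤ C * (1 + C) * R ∧
        ∀ y, F (y - x₀) ≤ C * (1 + C) * R →
          (∫ z, F (z - m) ∂μ) ≤ ∫ z, F (z - y) ∂μ) ∧
      (∀ m', (F (m' - x₀) ≤ C * (1 + C) * R ∧
        ∀ y, F (y - x₀) ≤ C * (1 + C) * R →
          (∫ z, F (z - m') ∂μ) ≤ ∫ z, F (z - y) ∂μ) → m' = m) ∧
      Filter.Tendsto γ Filter.atTop (nhds m) := by
  classical
  have hGF : GaugeFacts F := hF ▸ GaugeFacts.of_gauge hK_cpt.isBounded hK_conv hK_int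
  have hGw : ∀ w : EuclideanSpace ℝ (Fin n),
      G w = fun y => ∫ z, F (z - y) ∂(μ - μ {w} • Measure.dirac w) := by
    intro w; rw [hG]
  have hfd : ∀ w, fderiv ℝ (G w) w = xiFn F μ w := by
    intro w
    rw [hGw w]
    exact (xiFn_hasFDerivAt hGF hFsmooth hsupp w).fderiv
  set Φ : EuclideanSpace ℝ (Fin n) → ℝ := PhiFn F μ with hΦ
  set A : ℝ → ℝ := fun t => Φ (γ t) with hA
  have hAc : Continuous A := (PhiFn_continuous hGF hsupp).comp hγcont
  set rB : ℝ := C * (1 + C) * R with hrB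
  have hrBpos : 0 < rB := by
    rw [hrB]
    have h0 : 0 < C := by linarith
    have h1 : 0 < 1 + C := by linarith
    have := mul_pos (mul_pos h0 h1) hR
    linarith
  have hA0 : A 0 ≤ R := by
    simp only [hA, hΦ, hγ0]
    exact PhiFn_x₀_le hGF hsupp
  have hball : ∀ t : ℝ, A t ≤ R → F (γ t - x₀) ≤ rB := by
    intro t hAt
    have h1 : F (x₀ - γ t) ≤ C * R + Φ (γ t) := PhiFn_lower hGF hC hrev hsupp (γ t)
    have h2 : F (γ t - x₀) ≤ C * F (x₀ - γ t) := by
      have := hrev (x₀ - γ t)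
      rwa [neg_sub] at this
    have hAt' : Φ (γ t) ≤ R := hAt
    nlinarith
  -- the decrease rate
  set D : ℝ → ℝ := fun a => F (ℓinv (xiFn F μ (γ a))) *
    (F (ℓinv (xiFn F μ (γ a))) - (μ {γ a}).toReal) with hD
  -- key local analysis at a flow point
  have hflowpt : ∀ a : ℝ, 0 ≤ a →
      (∀ a', 0 ≤ a' → a' ≤ a → (μ {γ a'}).toReal < Fs (fderiv ℝ (G (γ a')) (γ a'))) →
      Filter.Tendsto (fun z => slope A a z) (nhdsWithin a (Set.Ioi a)) (nhds (-(D a)))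
        ∧ 0 < D a := by
    intro a ha hreg
    have hstrict : (μ {γ a}).toReal < Fs (xiFn F μ (γ a)) := by
      have h := hreg a ha le_rfl
      rwa [hfd (γ a)] at h
    have hmnn : (0:ℝ) ≤ (μ {γ a}).toReal := ENNReal.toReal_nonneg
    have hne : xiFn F μ (γ a) ≠ 0 := by
      intro hc
      rw [hc] at hstrict
      have : Fs (0 : EuclideanSpace ℝ (Fin n) →L[ℝ] ℝ) ≤ 0 :=
        Fs_le hGF hFs 0 (fun y _ => by simp)
      linarith
    have hvv : ℓinv (xiFn F μ (γ a)) ≠ 0 := by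
      intro hc
      apply hne
      have h1 : ℓ (ℓinv (xiFn F μ (γ a))) = xiFn F μ (γ a) := hright _
      rw [hc, hℓ0] at h1
      exact h1.symm
    have hFsle : Fs (xiFn F μ (γ a)) ≤ F (ℓinv (xiFn F μ (γ a))) := by
      have := Fs_ell_le hGF hFsmooth hFs hℓ hvv
      rwa [hright (xiFn F μ (γ a))] at this
    have hDpos : 0 < D a := by
      have h1 : (μ {γ a}).toReal < F (ℓinv (xiFn F μ (γ a))) := lt_of_lt_of_le hstrict hFsle
      have h2 : 0 < F (ℓinv (xiFn F μ (γ a))) := lt_of_le_of_lt hmnn h1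
      have h3 : 0 < F (ℓinv (xiFn F μ (γ a))) - (μ {γ a}).toReal := by linarith
      have h4 := mul_pos h2 h3
      rw [hD]
      exact h4
    have hd : HasDerivAt γ (-(ℓinv (xiFn F μ (γ a)))) a := by
      have := hflow a ha hreg
      rwa [hfd (γ a)] at this
    have htd := flow_slope hGF hFsmooth hsupp hℓ hℓ0 hright hne hd
    have hval : -(F (ℓinv (xiFn F μ (γ a))) ^ 2)
        + (μ {γ a}).toReal * F (ℓinv (xiFn F μ (γ a))) = -(D a) := by
      simp only [hD]; ring
    rw [hval] at htd
    exact ⟨htd, hDpos⟩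
  -- fencing wrapper
  have hfence : ∀ T b ε : ℝ, 0 ≤ T →
      (∀ x ∈ Set.Ico T b, (∀ a', 0 ≤ a' → a' ≤ x →
        (μ {γ a'}).toReal < Fs (fderiv ℝ (G (γ a')) (γ a'))) ∧ ε ≤ D x) →
      ∀ t ∈ Set.Icc T b, A t ≤ A T - ε * (t - T) := by
    intro T b ε hT hreg
    refine A_fence hAc ?_
    intro x hx r hr
    obtain ⟨hregx, hεD⟩ := hreg x hx
    obtain ⟨htd, hDpos⟩ := hflowpt x (le_trans hT hx.1) hregx
    have hlt : -(D x) < r := by linarith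
    exact (htd.eventually_lt_const hlt).frequently
  -- minimizers exist on the big ball
  have hx₀B : F (x₀ - x₀) ≤ rB := by
    rw [sub_self, hGF.zero]; exact hrBpos.le
  obtain ⟨mpt, hmptB, hmptmin⟩ := (ball_compact hGF rB).exists_isMinOn ⟨x₀, hx₀B⟩
    (PhiFn_continuous hGF hsupp).continuousOn
  have hmptB' : F (mpt - x₀) ≤ rB := hmptB
  have hmin : ∀ y, F (y - x₀) ≤ rB → Φ mpt ≤ Φ y := by
    intro y hy
    exact isMinOn_iff.mp hmptmin y hy
  -- uniqueness helper
  have huniq : ∀ p q : EuclideanSpace ℝ (Fin n),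
      F (p - x₀) ≤ rB → (∀ y, F (y - x₀) ≤ rB → Φ p ≤ Φ y) →
      F (q - x₀) ≤ rB → (∀ y, F (y - x₀) ≤ rB → Φ q ≤ Φ y) → p = q := by
    intro p q hpB hp hqB hq
    exact min_unique hGF hsupp hnotline hconv hpB hp hqB hq
  by_cases hS : ∃ a : ℝ, 0 ≤ a ∧ Fs (fderiv ℝ (G (γ a)) (γ a)) ≤ (μ {γ a}).toReal
  · -- STOPPED CASE
    set Sset : Set ℝ := {a | 0 ≤ a ∧ Fs (fderiv ℝ (G (γ a)) (γ a)) ≤ (μ {γ a}).toReal}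
      with hSset
    have hSne : Sset.Nonempty := hS
    have hSbdd : BddBelow Sset := ⟨0, fun x hx => hx.1⟩
    set s₀ : ℝ := sInf Sset with hs₀
    have hs₀0 : 0 ≤ s₀ := le_csInf hSne (fun x hx => hx.1)
    have hder0 : ∀ a : ℝ, s₀ < a → HasDerivAt γ 0 a := by
      intro a haa
      obtain ⟨s, hsS, hsa⟩ := exists_lt_of_csInf_lt hSne haa
      exact hstop a (le_trans hs₀0 haa.le) ⟨s, hsS.1, hsa.le, hsS.2⟩
    have hconst : ∀ b : ℝ, s₀ < b → γ b = γ s₀ := by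
      intro b hb
      have hstep : ∀ ε : ℝ, 0 < ε → ε ≤ b - s₀ → γ b = γ (s₀ + ε) := by
        intro ε hε hεb
        have := constant_of_has_deriv_right_zero (f := γ) (a := s₀ + ε) (b := b)
          hγcont.continuousOn (fun x hx => (hder0 x (by
            have := hx.1; linarith)).hasDerivWithinAt)
        exact this b ⟨by linarith, le_refl b⟩
      have htend : Filter.Tendsto (fun ε : ℝ => γ (s₀ + ε)) (nhdsWithin 0 (Set.Ioi 0))
          (nhds (γ s₀)) := by
        have h1 : Filter.Tendsto (fun ε : ℝ => s₀ + ε) (nhdsWithin 0 (Set.Ioi 0))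
            (nhds s₀) := by
          have hc : Continuous (fun ε : ℝ => s₀ + ε) := continuous_const.add continuous_id
          have h2 := hc.tendsto 0
          rw [add_zero] at h2
          exact h2.mono_left nhdsWithin_le_nhds
        exact (hγcont.tendsto s₀).comp h1
      have heq : (fun ε : ℝ => γ (s₀ + ε)) =ᶠ[nhdsWithin 0 (Set.Ioi 0)]
          (fun _ => γ b) := by
        filter_upwards [Ioc_mem_nhdsGT_of_mem
          (Set.mem_Ico.mpr ⟨le_refl (0:ℝ), sub_pos.mpr hb⟩)] with ε hε
        exact (hstep ε hε.1 hε.2).symm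
      have := htend.congr' heq
      exact (tendsto_nhds_unique this tendsto_const_nhds).symm
    set xstar := γ s₀ with hxstar
    -- stopping condition holds at xstar
    have hQx : Fs (fderiv ℝ (G xstar) xstar) ≤ (μ {xstar}).toReal := by
      obtain ⟨s, hsS⟩ := hSne
      have hs₀s : s₀ ≤ s := csInf_le hSbdd hsS
      rcases eq_or_lt_of_le hs₀s with heq | hlt
      · rw [hxstar, heq]
        exact hsS.2
      · have hγs : γ s = xstar := hconst s hlt
        have h2 := hsS.2
        rw [hγs] at h2
        exact h2
    -- xstar is a global minimizer
    have hglobal : ∀ y, Φ xstar ≤ Φ y := by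
      have hq' : Fs (fderiv ℝ (fun y => ∫ z, F (z - y)
          ∂(μ - μ {xstar} • Measure.dirac xstar)) xstar) ≤ (μ {xstar}).toReal := by
        rw [← hGw xstar]
        exact hQx
      exact stop_point_isMin hGF hFsmooth hsupp hFs xstar hq'
    -- xstar lies in the big ball
    have hxB : F (xstar - x₀) ≤ rB := by
      have hAs₀ : A s₀ ≤ R := by
        rcases eq_or_lt_of_le hs₀0 with heq | hpos
        · rw [← heq]; exact hA0
        · have hmono : ∀ b, 0 ≤ b → b < s₀ → A b ≤ A 0 := by
            intro b hb0 hbs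
            have hstrictx : ∀ x, x < s₀ → ∀ a', 0 ≤ a' → a' ≤ x →
                (μ {γ a'}).toReal < Fs (fderiv ℝ (G (γ a')) (γ a')) := by
              intro x hxs a' ha' haa'
              by_contra hQa
              push_neg at hQa
              have hmem : a' ∈ Sset := ⟨ha', hQa⟩
              have := csInf_le hSbdd hmem
              linarith
            have := hfence 0 b 0 le_rfl (fun x hx =>
              ⟨hstrictx x (lt_of_lt_of_le hx.2 hbs.le), (hflowpt x hx.1
                (hstrictx x (lt_of_lt_of_le hx.2 hbs.le))).2.le⟩) b ⟨hb0, le_refl b⟩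
            simpa using this
          have htendA : Filter.Tendsto A (nhdsWithin s₀ (Set.Iio s₀)) (nhds (A s₀)) :=
            (hAc.tendsto s₀).mono_left nhdsWithin_le_nhds
          have hAle : A s₀ ≤ A 0 := by
            refine le_of_tendsto htendA ?_
            filter_upwards [Ico_mem_nhdsLT_of_mem
              (Set.mem_Ioc.mpr ⟨hpos, le_refl s₀⟩)] with b hb
            exact hmono b hb.1 hb.2
          linarith [hA0]
      exact hball s₀ hAs₀
    -- convergence (eventually constant)
    have htendγ : Filter.Tendsto γ Filter.atTop (nhds xstar) := by
      refine Filter.Tendsto.congr' ?_ tendsto_const_nhds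
      filter_upwards [Filter.eventually_ge_atTop (s₀ + 1)] with t ht
      exact (hconst t (by linarith)).symm
    refine ⟨xstar, ⟨hxB, fun y _ => hglobal y⟩, ?_, htendγ⟩
    intro m' ⟨hm'B, hm'min⟩
    exact huniq m' xstar hm'B (fun y hy => hm'min y hy) hxB (fun y hy => hglobal y)
  · -- NEVER-STOP CASE
    push_neg at hS
    have hNQ : ∀ a : ℝ, 0 ≤ a → (μ {γ a}).toReal < Fs (fderiv ℝ (G (γ a)) (γ a)) := hS
    have hreg : ∀ x : ℝ, 0 ≤ x → ∀ a', 0 ≤ a' → a' ≤ x →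
        (μ {γ a'}).toReal < Fs (fderiv ℝ (G (γ a')) (γ a')) :=
      fun x _ a' ha' _ => hNQ a' ha'
    have hmono : ∀ s t : ℝ, 0 ≤ s → s ≤ t → A t ≤ A s := by
      intro s t hs hst
      have := hfence s t 0 hs (fun x hx =>
        ⟨hreg x (le_trans hs hx.1), (hflowpt x (le_trans hs hx.1)
          (hreg x (le_trans hs hx.1))).2.le⟩) t ⟨hst, le_refl t⟩
      simpa using this
    have hAball : ∀ t : ℝ, 0 ≤ t → F (γ t - x₀) ≤ rB := by
      intro t ht
      exact hball t (le_trans (hmono 0 t le_rfl ht) hA0)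
    -- A is bounded below by the minimum
    have hAlow : ∀ t : ℝ, 0 ≤ t → Φ mpt ≤ A t := fun t ht => hmin (γ t) (hAball t ht)
    -- limit of A
    set L : ℝ := sInf (A '' Set.Ici 0) with hL
    have hLne : (A '' Set.Ici 0).Nonempty := ⟨A 0, Set.mem_image_of_mem A Set.self_mem_Ici⟩
    have hLbdd : BddBelow (A '' Set.Ici 0) := by
      refine ⟨Φ mpt, ?_⟩
      rintro x ⟨t, ht, rfl⟩
      exact hAlow t ht
    have hLleA : ∀ t : ℝ, 0 ≤ t → L ≤ A t :=
      fun t ht => csInf_le hLbdd (Set.mem_image_of_mem A ht)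
    have hΦL : Φ mpt ≤ L := le_csInf hLne (by rintro x ⟨t, ht, rfl⟩; exact hAlow t ht)
    have hAtends : Filter.Tendsto A Filter.atTop (nhds L) := by
      rw [Metric.tendsto_atTop]
      intro ε hε
      have : sInf (A '' Set.Ici 0) < L + ε := by rw [← hL]; linarith
      obtain ⟨x, ⟨T, hT, rfl⟩, hlt⟩ := exists_lt_of_csInf_lt hLne this
      refine ⟨T, fun t ht => ?_⟩
      have h1 : A t ≤ A T := hmono T t hT ht
      have h2 : L ≤ A t := hLleA t (le_trans hT ht)
      rw [Real.dist_eq, abs_sub_lt_iff]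
      constructor <;> linarith
    -- small decrease rate happens somewhere
    have hsmall : ∀ ε : ℝ, 0 < ε → ∃ a : ℝ, 0 ≤ a ∧ D a < ε := by
      intro ε hε
      by_contra hcon
      push_neg at hcon
      set t₁ : ℝ := (A 0 - Φ mpt) / ε + 1 with ht₁
      have ht₁0 : 0 ≤ t₁ := by
        have h1 : 0 ≤ A 0 - Φ mpt := by
          have := hAlow 0 le_rfl
          linarith
        rw [ht₁]
        linarith [div_nonneg h1 hε.le]
      have := hfence 0 t₁ ε le_rfl (fun x hx =>
        ⟨hreg x hx.1, hcon x hx.1⟩) t₁ ⟨ht₁0, le_refl t₁⟩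
      have h2 := hAlow t₁ ht₁0
      have h3 : ε * (t₁ - 0) = A 0 - Φ mpt + ε := by
        rw [ht₁, sub_zero, mul_add, mul_one, mul_div_cancel₀ (A 0 - Φ mpt) hε.ne']
      rw [h3] at this
      linarith
    -- L is the minimum value
    have hLeq : L ≤ Φ mpt := by
      by_contra hcon
      push_neg at hcon
      set ε₀ : ℝ := L - Φ mpt with hε₀
      have hε₀pos : 0 < ε₀ := by simp only [hε₀]; linarith
      set M : ℝ := rB + C * rB with hM
      have hMpos : 0 < M := by nlinarith
      obtain ⟨a, ha0, haD⟩ := hsmall ((ε₀ / M) ^ 2) (by positivity)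
      -- lower bound from first-order inequality
      have hlb := phi_lower_bound hGF hFsmooth hsupp hFs (γ a) mpt
      have hFbd : F (γ a - mpt) ≤ M := by
        have h1 := hGF.add_le (γ a - x₀) (x₀ - mpt)
        simp only [sub_add_sub_cancel] at h1
        have h2 : F (x₀ - mpt) ≤ C * F (mpt - x₀) := by
          have := hrev (mpt - x₀)
          rwa [neg_sub] at this
        have h3 : C * F (mpt - x₀) ≤ C * rB := by nlinarith [hmptB']
        have h4 := hAball a ha0
        simp only [hM]
        linarith
      have hstrict : (μ {γ a}).toReal < Fs (xiFn F μ (γ a)) := by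
        have h := hNQ a ha0
        rwa [hfd (γ a)] at h
      have hmnn : (0:ℝ) ≤ (μ {γ a}).toReal := ENNReal.toReal_nonneg
      have hne : xiFn F μ (γ a) ≠ 0 := by
        intro hc
        rw [hc] at hstrict
        have : Fs (0 : EuclideanSpace ℝ (Fin n) →L[ℝ] ℝ) ≤ 0 :=
          Fs_le hGF hFs 0 (fun y _ => by simp)
        linarith
      have hvv : ℓinv (xiFn F μ (γ a)) ≠ 0 := by
        intro hc
        apply hne
        have h1 : ℓ (ℓinv (xiFn F μ (γ a))) = xiFn F μ (γ a) := hright _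
        rw [hc, hℓ0] at h1
        exact h1.symm
      have hFsle : Fs (xiFn F μ (γ a)) ≤ F (ℓinv (xiFn F μ (γ a))) := by
        have := Fs_ell_le hGF hFsmooth hFs hℓ hvv
        rwa [hright (xiFn F μ (γ a))] at this
      -- Φ mpt ≥ A a + (m - Fs ξ) F(γ a - mpt) ≥ L - (Fs ξ - m) M
      have hkey : ε₀ ≤ (Fs (xiFn F μ (γ a)) - (μ {γ a}).toReal) * M := by
        have h1 : L ≤ A a := hLleA a ha0
        have h2 : (μ {γ a}).toReal - Fs (xiFn F μ (γ a)) < 0 := by linarith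
        have h3 : ((μ {γ a}).toReal - Fs (xiFn F μ (γ a))) * F (γ a - mpt)
            ≥ ((μ {γ a}).toReal - Fs (xiFn F μ (γ a))) * M := by nlinarith
        have h4 : Φ (γ a) = A a := rfl
        nlinarith [hlb]
      have hgap : ε₀ / M ≤ F (ℓinv (xiFn F μ (γ a))) - (μ {γ a}).toReal := by
        rw [div_le_iff₀ hMpos]
        nlinarith
      have hFvlarge : ε₀ / M ≤ F (ℓinv (xiFn F μ (γ a))) := by
        linarith
      have hDlarge : (ε₀ / M) ^ 2 ≤ D a := by
        simp only [hD]
        have h0 : 0 < ε₀ / M := by positivity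
        nlinarith
      linarith
    have hLΦ : L = Φ mpt := le_antisymm hLeq hΦL
    -- convergence of γ to mpt
    have htendγ : Filter.Tendsto γ Filter.atTop (nhds mpt) := by
      rw [Metric.tendsto_atTop]
      intro ε hε
      obtain ⟨d, hd, htrap⟩ := phi_trap hGF hsupp (mpt := mpt) hmin
        (fun q hqB hqeq =>
          huniq q mpt hqB (fun y hy => (le_of_eq hqeq).trans (hmin y hy)) hmptB' hmin) hε
      have : ∀ᶠ t in Filter.atTop, A t < Φ mpt + d := by
        have := hAtends.eventually_lt_const (show L < Φ mpt + d by rw [hLΦ]; linarith)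
        exact this
      rw [Filter.eventually_atTop] at this
      obtain ⟨T, hT⟩ := this
      refine ⟨max T 0, fun t ht => ?_⟩
      have ht0 : 0 ≤ t := le_trans (le_max_right T 0) ht
      exact htrap (γ t) (hAball t ht0) (hT t (le_trans (le_max_left T 0) ht))
    refine ⟨mpt, ⟨hmptB', fun y hy => hmin y hy⟩, ?_, htendγ⟩
    intro m' ⟨hm'B, hm'min⟩
    exact huniq m' mpt hm'B (fun y hy => hm'min y hy) hmptB' hmin
end

section
/- Let F be the Minkowski gauge of a compact convex body K ⊂ ℝⁿ with 0 in its interior, with F of class C¹ on ℝⁿ∖{0}, and assume the Legendre map ℓ is a homeomorphism of ℝⁿ onto (ℝⁿ)*. Let μ be a compactly supported Borel probability measure, let x ∈ ℝⁿ satisfy μ({x}) < F*(D F_{μ_x}(x)), and let a ↦ x(a) be a path with x(0) = x and right derivative x′₊(0) = −ℓ⁻¹(D F_{μ_x}(x)). Then the right derivative at a = 0 of f(a) = F_μ(x(a)) equals −F*(D F_{μ_x}(x)) · (F*(D F_{μ_x}(x)) − μ({x})), which is strictly negative. -/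
open MeasureTheory Metric Set Filter Asymptotics

set_option maxHeartbeats 1000000 in
/-- Strict descent of the median functional along the Finsler gradient:
if `μ({x}) < F*(D F_{μ_x}(x))` and `γ` starts at `x` with right derivative
`-ℓ⁻¹(D F_{μ_x}(x))`, then `a ↦ F_μ(γ(a))` has right derivative
`-F*(D F_{μ_x}(x))·(F*(D F_{μ_x}(x)) - μ({x})) < 0` at `a = 0`. -/
theorem median_descent_direction
    {n : ℕ} (K : Set (EuclideanSpace ℝ (Fin n)))
    (hK_cpt : IsCompact K) (hK_conv : Convex ℝ K)
    (hK_int : (0 : EuclideanSpace ℝ (Fin n)) ∈ interior K)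
    (F : EuclideanSpace ℝ (Fin n) → ℝ) (hF : F = gauge K)
    (hFsmooth : ContDiffOn ℝ 1 F {(0 : EuclideanSpace ℝ (Fin n))}ᶜ)
    (ℓ : EuclideanSpace ℝ (Fin n) → (EuclideanSpace ℝ (Fin n) →L[ℝ] ℝ))
    (hℓ : ∀ v, v ≠ 0 → ℓ v = (1 / 2 : ℝ) • fderiv ℝ (fun w => F w ^ 2) v)
    (hℓ0 : ℓ 0 = 0)
    (ℓinv : (EuclideanSpace ℝ (Fin n) →L[ℝ] ℝ) → EuclideanSpace ℝ (Fin n))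
    (hleft : Function.LeftInverse ℓinv ℓ) (hright : Function.RightInverse ℓinv ℓ)
    (hℓcont : Continuous ℓ) (hℓinvcont : Continuous ℓinv)
    (μ : Measure (EuclideanSpace ℝ (Fin n))) [IsProbabilityMeasure μ]
    (hcpt : ∃ s : Set (EuclideanSpace ℝ (Fin n)), IsCompact s ∧ μ sᶜ = 0)
    -- `Fs` is the dual gauge `F*`
    (Fs : (EuclideanSpace ℝ (Fin n) →L[ℝ] ℝ) → ℝ)
    (hFs : Fs = fun ξ : EuclideanSpace ℝ (Fin n) →L[ℝ] ℝ =>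
      sSup (⇑ξ '' {y | F y ≤ 1}))
    (x : EuclideanSpace ℝ (Fin n))
    -- `ξ = D F_{μ_x}(x)` where `μ_x = μ - μ({x})·δ_x`
    (ξ : EuclideanSpace ℝ (Fin n) →L[ℝ] ℝ)
    (hξ : ξ = fderiv ℝ (fun y => ∫ z, F (z - y) ∂(μ - μ {x} • Measure.dirac x)) x)
    (hx : (μ {x}).toReal < Fs ξ)
    (γ : ℝ → EuclideanSpace ℝ (Fin n)) (hγ0 : γ 0 = x)
    (hγ' : HasDerivWithinAt γ (-(ℓinv ξ)) (Set.Ici 0) 0) :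
    HasDerivWithinAt (fun a => ∫ z, F (z - γ a) ∂μ)
        (-(Fs ξ) * (Fs ξ - (μ {x}).toReal)) (Set.Ici 0) 0 ∧
    -(Fs ξ) * (Fs ξ - (μ {x}).toReal) < 0 := by
  have habs : Absorbent ℝ K := absorbent_nhds_zero (mem_interior_iff_mem_nhds.mp hK_int)
  obtain ⟨ε, hε, hball⟩ := Metric.mem_nhds_iff.mp (mem_interior_iff_mem_nhds.mp hK_int)
  have hFle : ∀ u, F u ≤ ‖u‖ / ε := by
    intro u
    rw [hF, ← gauge_ball hε.le]
    exact gauge_mono (absorbent_ball_zero hε) hball u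
  obtain ⟨R, hR⟩ := hK_cpt.isBounded.subset_ball 0
  have hFge : ∀ u, ‖u‖ / max R 1 ≤ F u := by
    intro u
    rw [hF, ← gauge_ball (by positivity : (0:ℝ) ≤ max R 1)]
    exact gauge_mono habs (hR.trans (Metric.ball_subset_ball (le_max_left _ _))) u
  have hF0 : F 0 = 0 := by rw [hF]; exact gauge_zero
  have hFnonneg : ∀ u, 0 ≤ F u := fun u => hF ▸ gauge_nonneg u
  have hsub : ∀ u w, F (u + w) ≤ F u + F w := fun u w => by
    rw [hF]; exact gauge_add_le hK_conv habs u w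
  have hhom : ∀ (a : ℝ), 0 ≤ a → ∀ u, F (a • u) = a * F u := fun a ha u => by
    rw [hF, gauge_smul_of_nonneg ha, smul_eq_mul]
  have hFcont : Continuous F := hF ▸ continuous_gauge hK_conv (mem_interior_iff_mem_nhds.mp hK_int)
  set c := (μ {x}).toReal with hc
  have hc0 : 0 ≤ c := ENNReal.toReal_nonneg
  by_cases hξzero : ξ = 0
  · exfalso
    have hFs0 : Fs ξ = 0 := by
      rw [hFs, hξzero]
      show sSup ((⇑(0 : EuclideanSpace ℝ (Fin n) →L[ℝ] ℝ)) '' {y | F y ≤ 1}) = 0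
      have him : (⇑(0 : EuclideanSpace ℝ (Fin n) →L[ℝ] ℝ)) '' {y | F y ≤ 1} = {0} := by
        ext r
        constructor
        · rintro ⟨y, hy, rfl⟩; simp
        · rintro rfl
          exact ⟨0, by simp [hF0], by simp⟩
      rw [him, csSup_singleton]
    rw [hFs0] at hx
    linarith
  -- main case
  set v := ℓinv ξ with hv
  have hℓv : ℓ v = ξ := hright ξ
  have hvne : v ≠ 0 := fun h => hξzero (by rw [← hℓv, h, hℓ0])
  have hvpos : 0 < F v :=
    lt_of_lt_of_le (div_pos (norm_pos_iff.mpr hvne) (by positivity)) (hFge v)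
  have hFdiffv : DifferentiableAt ℝ F v :=
    (hFsmooth.contDiffAt (isOpen_compl_singleton.mem_nhds (by simpa using hvne))).differentiableAt
      one_ne_zero
  set D := fderiv ℝ F v with hD
  have hFdiff : HasFDerivAt F D v := hFdiffv.hasFDerivAt
  have hsq : HasFDerivAt (fun w => F w ^ 2) ((2 * F v) • D) v := by
    have h := hFdiff.mul hFdiff
    have : F * F = fun w => F w ^ 2 := by funext w; rw [Pi.mul_apply]; ring
    rw [this] at h
    refine h.congr_fderiv ?_
    rw [two_mul, add_smul]

  have hξD : ξ = F v • D := by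
    calc ξ = ℓ v := hℓv.symm
    _ = (1 / 2 : ℝ) • fderiv ℝ (fun w => F w ^ 2) v := hℓ v hvne
    _ = (1 / 2 : ℝ) • ((2 * F v) • D) := by rw [hsq.fderiv]
    _ = F v • D := by rw [smul_smul]; congr 1; ring
  have hDle : ∀ y, D y ≤ F y := by
    intro y
    have h1 : HasDerivWithinAt (fun t : ℝ => F (v + t • y)) (D y) (Set.Ici 0) 0 := by
      have hin : HasDerivWithinAt (fun t : ℝ => v + t • y) y (Set.Ici 0) 0 := by
        simpa using (((hasDerivAt_id (0:ℝ)).smul_const y).const_add v).hasDerivWithinAt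
      have hD' : HasFDerivAt F D ((fun t : ℝ => v + t • y) 0) := by simpa using hFdiff
      simpa [Function.comp_def] using hD'.comp_hasDerivWithinAt (x := 0) hin
    have := hasDerivWithinAt_iff_tendsto_slope.mp h1
    rw [show Set.Ici (0:ℝ) \ {0} = Set.Ioi 0 by simp [Set.Ici_sdiff_left]] at this
    refine le_of_tendsto this (eventually_nhdsWithin_of_forall fun t ht => ?_)
    have ht : (0:ℝ) < t := ht
    rw [slope_def_field]
    have h2 : F (v + t • y) ≤ F v + t * F y := by
      calc F (v + t • y) ≤ F v + F (t • y) := hsub _ _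
      _ = F v + t * F y := by rw [hhom t ht.le]
    simp only [sub_zero, zero_smul, add_zero]
    rw [div_le_iff₀ ht]
    linarith
  have hDv : D v = F v := by
    have hin : HasDerivAt (fun t : ℝ => t • v) v 1 := by
      simpa using (hasDerivAt_id (1:ℝ)).smul_const v
    have hD' : HasFDerivAt F D ((fun t : ℝ => t • v) 1) := by simpa using hFdiff
    have h1 : HasDerivAt (fun t : ℝ => F (t • v)) (D v) 1 := by
      simpa [Function.comp_def] using hD'.comp_hasDerivAt (x := 1) hin
    have h2 : HasDerivAt (fun t : ℝ => F (t • v)) (F v) 1 := by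
      have hmul : HasDerivAt (fun t : ℝ => t * F v) (F v) 1 := by
        simpa using (hasDerivAt_id (1:ℝ)).mul_const (F v)
      refine hmul.congr_of_eventuallyEq ?_
      filter_upwards [eventually_gt_nhds (zero_lt_one)] with t ht
      rw [hhom t ht.le]
    exact h1.unique h2
  have hξv : ξ v = F v ^ 2 := by
    rw [hξD, ContinuousLinearMap.smul_apply, hDv, smul_eq_mul, sq]
  have hξle : ∀ y, ξ y ≤ F v * F y := by
    intro y
    rw [hξD, ContinuousLinearMap.smul_apply, smul_eq_mul]
    exact mul_le_mul_of_nonneg_left (hDle y) hvpos.le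
  have hFsval : Fs ξ = F v := by
    rw [hFs]
    refine le_antisymm ?_ ?_
    · refine csSup_le (Set.Nonempty.image _ ⟨0, by simp [hF0]⟩) ?_
      rintro r ⟨y, hy, rfl⟩
      calc ξ y ≤ F v * F y := hξle y
      _ ≤ F v * 1 := mul_le_mul_of_nonneg_left hy hvpos.le
      _ = F v := mul_one _
    · have hbdd : BddAbove (⇑ξ '' {y | F y ≤ 1}) := by
        refine ⟨F v, ?_⟩
        rintro r ⟨y, hy, rfl⟩
        calc ξ y ≤ F v * F y := hξle y
        _ ≤ F v * 1 := mul_le_mul_of_nonneg_left hy hvpos.le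
        _ = F v := mul_one _
      refine le_csSup hbdd ⟨(F v)⁻¹ • v, ?_, ?_⟩
      · show F ((F v)⁻¹ • v) ≤ 1
        rw [hhom _ (inv_nonneg.mpr hvpos.le), inv_mul_cancel₀ hvpos.ne']
      · rw [_root_.map_smul, smul_eq_mul, hξv, sq]
        field_simp
  -- measure decomposition
  set ν := μ - μ {x} • Measure.dirac x with hν
  have hdle : μ {x} • Measure.dirac x ≤ μ := by
    rw [MeasureTheory.Measure.le_iff]
    intro s hs
    rw [Measure.smul_apply, Measure.dirac_apply' _ hs, smul_eq_mul]
    by_cases hxs : x ∈ s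
    · simpa [hxs] using measure_mono (Set.singleton_subset_iff.mpr hxs)
    · simp [hxs]
  haveI : IsFiniteMeasure (μ {x} • Measure.dirac x) := isFiniteMeasure_of_le μ hdle
  have hsum : ν + μ {x} • Measure.dirac x = μ := Measure.sub_add_cancel_of_le hdle
  haveI hνfin : IsFiniteMeasure ν := isFiniteMeasure_of_le μ Measure.sub_le
  obtain ⟨s, hs_cpt, hs_null⟩ := hcpt
  have hν_null : ν sᶜ = 0 :=
    le_antisymm (le_trans (Measure.le_iff'.mp Measure.sub_le sᶜ) hs_null.le) zero_le
  obtain ⟨Rs, hRs⟩ := hs_cpt.isBounded.subset_closedBall 0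
  have hint : ∀ y, Integrable (fun z => F (z - y)) ν := by
    intro y
    refine Integrable.mono' (integrable_const ((Rs + ‖y‖) / ε))
      ((hFcont.comp (continuous_id.sub continuous_const)).aestronglyMeasurable) ?_
    have hae : ∀ᵐ z ∂ν, z ∈ s := by
      rw [ae_iff]
      exact hν_null
    filter_upwards [hae] with z hz
    rw [Real.norm_eq_abs, abs_of_nonneg (hFnonneg _)]
    calc F (z - y) ≤ ‖z - y‖ / ε := hFle _
    _ ≤ (‖z‖ + ‖y‖) / ε := by gcongr; exact norm_sub_le _ _
    _ ≤ (Rs + ‖y‖) / ε := by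
        gcongr
        exact mem_closedBall_zero_iff.mp (hRs hz)
  have hdint : ∀ y, Integrable (fun z => F (z - y)) (μ {x} • Measure.dirac x) := by
    intro y
    refine Integrable.smul_measure ?_ (measure_ne_top μ _)
    refine (integrable_const (F (x - y))).congr ?_
    rw [Filter.EventuallyEq, MeasureTheory.ae_dirac_eq]
    exact Filter.eventually_pure.mpr rfl
  have key : (fun a => ∫ z, F (z - γ a) ∂μ) =
      fun a => (∫ z, F (z - γ a) ∂ν) + c * F (x - γ a) := by
    funext a
    rw [← hsum, integral_add_measure (hint _) (hdint _), integral_smul_measure,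
      integral_dirac, smul_eq_mul]
  have hgdiff : DifferentiableAt ℝ (fun y => ∫ z, F (z - y) ∂ν) x := by
    by_contra h
    exact hξzero (by rw [hξ, fderiv_zero_of_not_differentiableAt h])
  have hg : HasFDerivAt (fun y => ∫ z, F (z - y) ∂ν) ξ x := hξ ▸ hgdiff.hasFDerivAt
  have h1 : HasDerivWithinAt (fun a => ∫ z, F (z - γ a) ∂ν) (ξ (-v)) (Set.Ici 0) 0 := by
    have := hg.comp_hasDerivWithinAt_of_eq (x := 0) hγ' hγ0.symm
    simpa [Function.comp_def] using this
  have h2 : HasDerivWithinAt (fun a => c * F (x - γ a)) (c * F v) (Set.Ici 0) 0 := by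
    rw [hasDerivWithinAt_iff_isLittleO]
    have hγo := hasDerivWithinAt_iff_isLittleO.mp hγ'
    refine IsBigO.trans_isLittleO ?_ hγo
    refine isBigO_iff.mpr ⟨c / ε, ?_⟩
    filter_upwards [self_mem_nhdsWithin] with a (ha : a ∈ Set.Ici 0)
    have ha : (0:ℝ) ≤ a := ha
    have e1 : x - γ 0 = 0 := by rw [hγ0]; simp
    have e2 : F (a • v) = a * F v := hhom a ha v
    have e3 : (x - γ a) - a • v = -(γ a - γ 0 - (a - 0) • (-v)) := by
      rw [hγ0]
      simp only [sub_zero, smul_neg]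
      abel
    calc ‖c * F (x - γ a) - c * F (x - γ 0) - (a - 0) • (c * F v)‖
        = c * |F (x - γ a) - F (a • v)| := by
          rw [e1, hF0, e2]
          simp only [mul_zero, sub_zero, smul_eq_mul, Real.norm_eq_abs]
          rw [show c * F (x - γ a) - a * (c * F v) = c * (F (x - γ a) - a * F v) by ring,
            abs_mul, abs_of_nonneg hc0]
    _ ≤ c * (‖(x - γ a) - a • v‖ / ε) := by
          gcongr
          rw [abs_sub_le_iff]
          constructor
          · have := hsub (a • v) ((x - γ a) - a • v)
            rw [add_sub_cancel] at this
            linarith [hFle ((x - γ a) - a • v)]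
          · have := hsub (x - γ a) (a • v - (x - γ a))
            rw [add_sub_cancel] at this
            have h4 : F (a • v - (x - γ a)) ≤ ‖(x - γ a) - a • v‖ / ε := by
              have := hFle (a • v - (x - γ a))
              rwa [show ‖a • v - (x - γ a)‖ = ‖(x - γ a) - a • v‖ from norm_sub_rev _ _] at this
            linarith
    _ = c / ε * ‖γ a - γ 0 - (a - 0) • (-v)‖ := by
          rw [e3, norm_neg]; ring
  have hmain := h1.add h2
  have hval : ξ (-v) + c * F v = -(Fs ξ) * (Fs ξ - c) := by
    rw [map_neg, hξv, hFsval]; ring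
  constructor
  · rw [key]
    rw [← hval]
    exact hmain
  · rw [hFsval]
    rw [hFsval] at hx
    nlinarith [hvpos, hx]
end
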